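/- arXiv:1807.07678 — 7 statements merged into one kernel-verified Lean document; each statement's English description precedes it below -/
import Mathlib

section
/- For all natural numbers a, b, the polynomial identity holds: (1+t) * Σ_{i=0}^{a} Σ_{j=0}^{b} C(a,i)·C(b,j)·C(a-i+j,j)·C(b+i-j,i)·t^{i+j} = Σ_{i=0}^{min(a,b)} C(2i,i)·C(a,i)·C(b,i)·t^i·(1+t)^{a+b+1-2i} as polynomials in t with integer coefficients. -/
open Polynomial Finset

-- trinomial revision, unconditional
lemma trin (n x y : ℕ) : n.choose x * (n - x).choose y = n.choose (x + y) * (x + y).choose x := by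
  rcases le_or_gt (x + y) n with h | h
  · have := (Nat.choose_mul (n := n) (Nat.le_add_right x y)).symm
    simpa using this
  · rw [Nat.choose_eq_zero_of_lt h, zero_mul]
    rcases le_or_gt x n with hx | hx
    · rw [Nat.choose_eq_zero_of_lt (by omega : n - x < y), mul_zero]
    · rw [Nat.choose_eq_zero_of_lt hx, zero_mul]

lemma vander (u n : ℕ) :
    (u + n).choose n = ∑ s ∈ range (n + 1), u.choose s * n.choose s := by
  rw [Nat.add_choose_eq, Finset.Nat.sum_antidiagonal_eq_sum_range_succ_mk]
  exact Finset.sum_congr rfl fun s hs => by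
    rw [Nat.choose_symm (by simp only [Finset.mem_range] at hs; omega)]

lemma claimA (a m n : ℕ) :
    a.choose m * (a - m + n).choose n
      = ∑ s ∈ range (n + 1), a.choose (m + s) * ((m + s).choose m * n.choose s) := by
  rw [vander, Finset.mul_sum]
  refine Finset.sum_congr rfl fun s _ => ?_
  rw [← mul_assoc, trin a m s, mul_assoc]

-- diagonal reindexing
lemma diag {M : Type*} [AddCommMonoid M] (A B : ℕ) (f : ℕ → ℕ → M)
    (h : ∀ p m, m ≤ p → p < A + B → (A ≤ m ∨ B ≤ p - m) → f p m = 0) :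
    ∑ m ∈ range A, ∑ s ∈ range B, f (m + s) m
      = ∑ p ∈ range (A + B), ∑ m ∈ range (p + 1), f p m := by
  rw [Finset.sum_sigma' (range A) (fun _ => range B) (fun m s => f (m + s) m),
      Finset.sum_sigma' (range (A + B)) (fun p => range (p + 1)) (fun p m => f p m)]
  have hzero : ∀ x ∈ (range (A + B)).sigma (fun p => range (p + 1)),
      x ∉ ((range (A + B)).sigma (fun p => range (p + 1))).filter
        (fun x : Σ _ : ℕ, ℕ => x.2 < A ∧ x.1 - x.2 < B) → f x.1 x.2 = 0 := by
    rintro ⟨p, m⟩ hx hx2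
    simp only [Finset.mem_sigma, Finset.mem_range] at hx
    simp only [Finset.mem_filter, Finset.mem_sigma, Finset.mem_range, not_and] at hx2
    exact h p m (by omega) hx.1 (by omega)
  rw [← Finset.sum_subset (Finset.filter_subset _ _) hzero]
  refine Finset.sum_nbij' (fun x => ⟨x.1 + x.2, x.1⟩) (fun x => ⟨x.2, x.1 - x.2⟩)
    ?_ ?_ ?_ ?_ ?_
  · rintro ⟨m, s⟩ hx
    simp only [Finset.mem_sigma, Finset.mem_range, Finset.mem_filter] at hx ⊢
    refine ⟨⟨?_, ?_⟩, ?_, ?_⟩ <;> omega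
  · rintro ⟨p, m⟩ hx
    simp only [Finset.mem_filter, Finset.mem_sigma, Finset.mem_range] at hx ⊢
    refine ⟨?_, ?_⟩ <;> omega
  · rintro ⟨m, s⟩ hx
    show (⟨m, m + s - m⟩ : Σ _ : ℕ, ℕ) = ⟨m, s⟩
    have h2 : m + s - m = s := by omega
    rw [h2]
  · rintro ⟨p, m⟩ hx
    simp only [Finset.mem_filter, Finset.mem_sigma, Finset.mem_range] at hx
    show (⟨m + (p - m), m⟩ : Σ _ : ℕ, ℕ) = ⟨p, m⟩
    have h2 : m + (p - m) = p := by omega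
    rw [h2]
  · rintro ⟨m, s⟩ hx
    rfl

lemma central (i : ℕ) :
    ∑ x ∈ range (i + 1), i.choose x * i.choose (i - x) = (2 * i).choose i := by
  rw [two_mul, Nat.add_choose_eq, Finset.Nat.sum_antidiagonal_eq_sum_range_succ_mk]

lemma keyterm (p q x y : ℕ) (hx : x ≤ p) (hy : y ≤ q) :
    p.choose (p - x) * q.choose (q - y) * ((q - y).choose x * (p - x).choose y)
      = p.choose (x + y) * q.choose (x + y)
        * ((x + y).choose x * (x + y).choose (x + y - x)) := by
  rw [Nat.choose_symm hx, Nat.choose_symm hy, Nat.add_sub_cancel_left]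
  have h1 := trin p x y
  have h2 := trin q y x
  calc p.choose x * q.choose y * ((q - y).choose x * (p - x).choose y)
      = (p.choose x * (p - x).choose y) * (q.choose y * (q - y).choose x) := by ring
    _ = (p.choose (x + y) * (x + y).choose x) * (q.choose (y + x) * (y + x).choose y) := by
        rw [h1, h2]
    _ = p.choose (x + y) * q.choose (x + y) * ((x + y).choose x * (x + y).choose y) := by
        rw [Nat.add_comm y x]; ring

lemma key (p q : ℕ) :
    ∑ m ∈ range (p + 1), ∑ n ∈ range (q + 1),
        ((p.choose m * q.choose n * (n.choose (p - m) * m.choose (q - n)) : ℕ) : Polynomial ℤ)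
          * X ^ (m + n)
      = ∑ i ∈ range (p + q + 1),
          (((2 * i).choose i * (p.choose i * q.choose i) : ℕ) : Polynomial ℤ) * X ^ (p + q - i) := by
  have L1 : ∑ m ∈ range (p + 1), ∑ n ∈ range (q + 1),
      ((p.choose m * q.choose n * (n.choose (p - m) * m.choose (q - n)) : ℕ) : Polynomial ℤ)
        * X ^ (m + n)
      = ∑ x ∈ range (p + 1), ∑ y ∈ range (q + 1),
        ((p.choose (x + y) * q.choose (x + y)
          * ((x + y).choose x * (x + y).choose ((x + y) - x)) : ℕ) : Polynomial ℤ)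
          * X ^ (p + q - (x + y)) := by
    rw [← Finset.sum_range_reflect]
    refine Finset.sum_congr rfl fun x hx => ?_
    rw [← Finset.sum_range_reflect]
    refine Finset.sum_congr rfl fun y hy => ?_
    simp only [Finset.mem_range] at hx hy
    have hx' : x ≤ p := by omega
    have hy' : y ≤ q := by omega
    have e1 : p + 1 - 1 - x = p - x := by omega
    have e2 : q + 1 - 1 - y = q - y := by omega
    rw [e1, e2]
    have e3 : p - (p - x) = x := by omega
    have e4 : q - (q - y) = y := by omega
    rw [e3, e4, keyterm p q x y hx' hy']
    have e5 : p - x + (q - y) = p + q - (x + y) := by omega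
    rw [e5]
  rw [L1]
  rw [diag (p + 1) (q + 1)
    (fun i x => ((p.choose i * q.choose i * (i.choose x * i.choose (i - x)) : ℕ) : Polynomial ℤ)
      * X ^ (p + q - i)) ?hzero]
  case hzero =>
    intro i x hxi hi hor
    rcases hor with h1 | h1
    · simp [Nat.choose_eq_zero_of_lt (show p < i by omega)]
    · simp [Nat.choose_eq_zero_of_lt (show q < i by omega)]
  have hlast : p + 1 + (q + 1) = (p + q + 1) + 1 := by omega
  rw [hlast, Finset.sum_range_succ]
  have hz : ∑ m ∈ range (p + q + 1 + 1), ((p.choose (p + q + 1)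
      * q.choose (p + q + 1) * ((p + q + 1).choose m * (p + q + 1).choose (p + q + 1 - m)) : ℕ)
      : Polynomial ℤ) * X ^ (p + q - (p + q + 1)) = 0 := by
    rw [Nat.choose_eq_zero_of_lt (by omega : p < p + q + 1)]
    simp
  rw [hz, add_zero]
  refine Finset.sum_congr rfl fun i hi => ?_
  rw [← Finset.sum_mul, ← Nat.cast_sum]
  have : ∑ x ∈ range (i + 1),
      p.choose i * q.choose i * (i.choose x * i.choose (i - x))
      = p.choose i * q.choose i * ∑ x ∈ range (i + 1), i.choose x * i.choose (i - x) := by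
    rw [Finset.mul_sum]
  rw [this, central]
  push_cast
  ring

lemma shrink {M : Type*} [AddCommMonoid M] {A B : ℕ} (h : A ≤ B) (f : ℕ → M)
    (hz : ∀ p, A ≤ p → p < B → f p = 0) :
    ∑ p ∈ range B, f p = ∑ p ∈ range A, f p :=
  (Finset.sum_subset (Finset.range_subset_range.mpr h) (fun x hx hx2 => by
    simp only [Finset.mem_range] at hx hx2
    exact hz x (by omega) hx)).symm

lemma onePlusX_pow (n : ℕ) :
    (1 + X : Polynomial ℤ) ^ n
      = ∑ u ∈ range (n + 1), ((n.choose u : ℕ) : Polynomial ℤ) * X ^ u := by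
  rw [add_comm, add_pow]
  refine Finset.sum_congr rfl fun u hu => ?_
  rw [one_pow]
  ring

lemma shift1 (a i : ℕ) (hi : i ≤ a) :
    ∑ p ∈ range (a + 1), ((a.choose p * p.choose i : ℕ) : Polynomial ℤ) * X ^ (p - i)
      = ((a.choose i : ℕ) : Polynomial ℤ)
        * ∑ u ∈ range (a - i + 1), (((a - i).choose u : ℕ) : Polynomial ℤ) * X ^ u := by
  rw [Finset.mul_sum]
  rw [Finset.range_eq_Ico, ← Finset.sum_Ico_consecutive _ (Nat.zero_le i) (by omega : i ≤ a + 1)]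
  have h1 : ∑ p ∈ Finset.Ico 0 i, ((a.choose p * p.choose i : ℕ) : Polynomial ℤ) * X ^ (p - i)
      = 0 := by
    refine Finset.sum_eq_zero fun p hp => ?_
    simp only [Finset.mem_Ico] at hp
    rw [Nat.choose_eq_zero_of_lt (by omega : p < i)]
    simp
  rw [h1, zero_add, Finset.sum_Ico_eq_sum_range]
  have h2 : a + 1 - i = a - i + 1 := by omega
  rw [h2]
  refine Finset.sum_congr rfl fun u hu => ?_
  rw [← trin a i u]
  have h3 : i + u - i = u := by omega
  rw [h3]
  push_cast
  ring

lemma Rside (a b : ℕ) :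
    ∑ i ∈ range (min a b + 1),
        (((2 * i).choose i * a.choose i * b.choose i : ℕ) : Polynomial ℤ) * X ^ i
          * (1 + X) ^ (a + b + 1 - 2 * i)
      = (1 + X) * ∑ p ∈ range (a + 1), ∑ q ∈ range (b + 1), ∑ i ∈ range (a + b + 1),
          ((a.choose p * b.choose q * ((2 * i).choose i * (p.choose i * q.choose i)) : ℕ)
            : Polynomial ℤ) * X ^ (p + q - i) := by
  have hterm : ∀ i ∈ range (min a b + 1),
      (((2 * i).choose i * a.choose i * b.choose i : ℕ) : Polynomial ℤ) * X ^ i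
          * (1 + X) ^ (a + b + 1 - 2 * i)
        = (1 + X) * ∑ p ∈ range (a + 1), ∑ q ∈ range (b + 1),
            ((a.choose p * b.choose q * ((2 * i).choose i * (p.choose i * q.choose i)) : ℕ)
              : Polynomial ℤ) * X ^ (p + q - i) := by
    intro i hi
    simp only [Finset.mem_range] at hi
    have hia : i ≤ a := by omega
    have hib : i ≤ b := by omega
    have e : a + b + 1 - 2 * i = (a - i) + ((b - i) + 1) := by omega
    rw [e, pow_add, pow_succ]
    rw [onePlusX_pow (a - i), onePlusX_pow (b - i)]
    have e2 : (((2 * i).choose i * a.choose i * b.choose i : ℕ) : Polynomial ℤ) * X ^ i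
        * ((∑ u ∈ range (a - i + 1), (((a - i).choose u : ℕ) : Polynomial ℤ) * X ^ u)
          * ((∑ u ∈ range (b - i + 1), (((b - i).choose u : ℕ) : Polynomial ℤ) * X ^ u)
            * (1 + X)))
        = (1 + X) * ((((2 * i).choose i : ℕ) : Polynomial ℤ) * X ^ i
          * ((((a.choose i : ℕ) : Polynomial ℤ)
              * ∑ u ∈ range (a - i + 1), (((a - i).choose u : ℕ) : Polynomial ℤ) * X ^ u)
            * (((b.choose i : ℕ) : Polynomial ℤ)
              * ∑ u ∈ range (b - i + 1), (((b - i).choose u : ℕ) : Polynomial ℤ) * X ^ u))) := by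
      push_cast
      ring
    rw [e2, ← shift1 a i hia, ← shift1 b i hib]
    congr 1
    rw [Finset.sum_mul_sum (range (a + 1)) (range (b + 1))
      (fun p => ((a.choose p * p.choose i : ℕ) : Polynomial ℤ) * X ^ (p - i))
      (fun q => ((b.choose q * q.choose i : ℕ) : Polynomial ℤ) * X ^ (q - i))]
    simp only [Finset.mul_sum]
    refine Finset.sum_congr rfl fun p hp => ?_
    refine Finset.sum_congr rfl fun q hq => ?_
    rcases le_or_gt i p with hip | hip
    · rcases le_or_gt i q with hiq | hiq
      · have ee : p + q - i = i + ((p - i) + (q - i)) := by omega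
        rw [ee, pow_add, pow_add]
        push_cast
        ring
      · rw [Nat.choose_eq_zero_of_lt hiq]
        push_cast
        ring
    · rw [Nat.choose_eq_zero_of_lt hip]
      push_cast
      ring
  rw [Finset.sum_congr rfl hterm, ← Finset.mul_sum]
  congr 1
  rw [Finset.sum_comm]
  refine Finset.sum_congr rfl fun p hp => ?_
  rw [Finset.sum_comm]
  refine Finset.sum_congr rfl fun q hq => ?_
  simp only [Finset.mem_range] at hp hq
  refine (shrink (by omega : min a b + 1 ≤ a + b + 1) _ fun i h1 h2 => ?_).symm
  rcases le_or_gt i a with hia | hia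
  · rw [Nat.choose_eq_zero_of_lt (by omega : q < i)]
    simp
  · rw [Nat.choose_eq_zero_of_lt (by omega : p < i)]
    simp

lemma Lside (a b : ℕ) :
    ∑ m ∈ range (a + 1), ∑ n ∈ range (b + 1),
        ((a.choose m * b.choose n * (a - m + n).choose n * (b + m - n).choose m : ℕ)
          : Polynomial ℤ) * X ^ (m + n)
      = ∑ p ∈ range (a + 1), ∑ q ∈ range (b + 1), ∑ i ∈ range (a + b + 1),
          ((a.choose p * b.choose q * ((2 * i).choose i * (p.choose i * q.choose i)) : ℕ)
            : Polynomial ℤ) * X ^ (p + q - i) := by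
  -- Stage 1: expand each term into a double sum over (s, r)
  have st1 : ∑ m ∈ range (a + 1), ∑ n ∈ range (b + 1),
      ((a.choose m * b.choose n * (a - m + n).choose n * (b + m - n).choose m : ℕ)
        : Polynomial ℤ) * X ^ (m + n)
      = ∑ m ∈ range (a + 1), ∑ n ∈ range (b + 1), ∑ s ∈ range (b + 1), ∑ r ∈ range (a + 1),
          (((a.choose (m + s) * ((m + s).choose m * n.choose s))
            * (b.choose (n + r) * ((n + r).choose n * m.choose r)) : ℕ) : Polynomial ℤ)
            * X ^ (m + n) := by
    refine Finset.sum_congr rfl fun m hm => Finset.sum_congr rfl fun n hn => ?_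
    simp only [Finset.mem_range] at hm hn
    have hbn : b + m - n = b - n + m := by omega
    have hw : a.choose m * b.choose n * (a - m + n).choose n * (b + m - n).choose m
        = (a.choose m * (a - m + n).choose n) * (b.choose n * (b - n + m).choose m) := by
      rw [hbn]; ring
    rw [hw, claimA a m n, claimA b n m]
    have ext1 : ∑ s ∈ range (n + 1), a.choose (m + s) * ((m + s).choose m * n.choose s)
        = ∑ s ∈ range (b + 1), a.choose (m + s) * ((m + s).choose m * n.choose s) := by
      refine (shrink (by omega) _ fun s h1 h2 => ?_).symm
      rw [Nat.choose_eq_zero_of_lt (by omega : n < s)]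
      simp
    have ext2 : ∑ r ∈ range (m + 1), b.choose (n + r) * ((n + r).choose n * m.choose r)
        = ∑ r ∈ range (a + 1), b.choose (n + r) * ((n + r).choose n * m.choose r) := by
      refine (shrink (by omega) _ fun r h1 h2 => ?_).symm
      rw [Nat.choose_eq_zero_of_lt (by omega : m < r)]
      simp
    rw [ext1, ext2]
    push_cast
    rw [Finset.sum_mul_sum, Finset.sum_mul]
    refine Finset.sum_congr rfl fun s hs => ?_
    rw [Finset.sum_mul]
  rw [st1]
  -- Stage 2: swap the n-sum and the s-sum
  have st2 : ∑ m ∈ range (a + 1), ∑ n ∈ range (b + 1), ∑ s ∈ range (b + 1),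
      ∑ r ∈ range (a + 1),
        (((a.choose (m + s) * ((m + s).choose m * n.choose s))
          * (b.choose (n + r) * ((n + r).choose n * m.choose r)) : ℕ) : Polynomial ℤ)
          * X ^ (m + n)
      = ∑ m ∈ range (a + 1), ∑ s ∈ range (b + 1), ∑ n ∈ range (b + 1),
        ∑ r ∈ range (a + 1),
        (((a.choose (m + s) * ((m + s).choose m * n.choose s))
          * (b.choose (n + r) * ((n + r).choose n * m.choose r)) : ℕ) : Polynomial ℤ)
          * X ^ (m + n) :=
    Finset.sum_congr rfl fun m _ => Finset.sum_comm
  rw [st2]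
  -- Stage 3: reindex the inner (n, r) double sum along diagonals q = n + r
  have st3 : ∀ m ∈ range (a + 1), ∀ s ∈ range (b + 1),
      ∑ n ∈ range (b + 1), ∑ r ∈ range (a + 1),
        (((a.choose (m + s) * ((m + s).choose m * n.choose s))
          * (b.choose (n + r) * ((n + r).choose n * m.choose r)) : ℕ) : Polynomial ℤ)
          * X ^ (m + n)
      = ∑ q ∈ range (b + 1 + (a + 1)), ∑ n ∈ range (q + 1),
        (((a.choose (m + s) * ((m + s).choose m * n.choose s))
          * (b.choose q * (q.choose n * m.choose (q - n))) : ℕ) : Polynomial ℤ)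
          * X ^ (m + n) := by
    intro m hm s hs
    simp only [Finset.mem_range] at hm hs
    rw [← diag (b + 1) (a + 1) (fun q n =>
      (((a.choose (m + s) * ((m + s).choose m * n.choose s))
        * (b.choose q * (q.choose n * m.choose (q - n))) : ℕ) : Polynomial ℤ) * X ^ (m + n))
      (fun q n hnq hq hor => ?_)]
    · refine Finset.sum_congr rfl fun n hn => Finset.sum_congr rfl fun r hr => ?_
      rw [Nat.add_sub_cancel_left]
    · rcases hor with h1 | h1
      · simp [Nat.choose_eq_zero_of_lt (show b < q by omega)]
      · simp [Nat.choose_eq_zero_of_lt (show m < q - n by omega)]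
  rw [Finset.sum_congr rfl fun m hm => Finset.sum_congr rfl (st3 m hm)]
  -- Stage 4: reindex the outer (m, s) double sum along diagonals p = m + s
  have st4 : ∑ m ∈ range (a + 1), ∑ s ∈ range (b + 1),
      ∑ q ∈ range (b + 1 + (a + 1)), ∑ n ∈ range (q + 1),
        (((a.choose (m + s) * ((m + s).choose m * n.choose s))
          * (b.choose q * (q.choose n * m.choose (q - n))) : ℕ) : Polynomial ℤ)
          * X ^ (m + n)
      = ∑ p ∈ range (a + 1 + (b + 1)), ∑ m ∈ range (p + 1),
        ∑ q ∈ range (b + 1 + (a + 1)), ∑ n ∈ range (q + 1),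
        (((a.choose p * (p.choose m * n.choose (p - m)))
          * (b.choose q * (q.choose n * m.choose (q - n))) : ℕ) : Polynomial ℤ)
          * X ^ (m + n) := by
    rw [← diag (a + 1) (b + 1) (fun p m =>
      ∑ q ∈ range (b + 1 + (a + 1)), ∑ n ∈ range (q + 1),
        (((a.choose p * (p.choose m * n.choose (p - m)))
          * (b.choose q * (q.choose n * m.choose (q - n))) : ℕ) : Polynomial ℤ)
          * X ^ (m + n))
      (fun p m hmp hp hor => ?_)]
    · refine Finset.sum_congr rfl fun m hm => Finset.sum_congr rfl fun s hs => ?_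
      simp only [Nat.add_sub_cancel_left]
    · refine Finset.sum_eq_zero fun q hq => Finset.sum_eq_zero fun n hn => ?_
      simp only [Finset.mem_range] at hq hn
      rcases hor with h1 | h1
      · simp [Nat.choose_eq_zero_of_lt (show a < p by omega)]
      · rcases le_or_gt n b with h2 | h2
        · simp [Nat.choose_eq_zero_of_lt (show n < p - m by omega)]
        · simp [Nat.choose_eq_zero_of_lt (show b < q by omega)]
  rw [st4]
  -- Stage 5: shrink the p-range
  have e5 : a + 1 + (b + 1) = a + b + 2 := by omega
  rw [e5]
  rw [shrink (by omega : a + 1 ≤ a + b + 2) _ (fun p h1 h2 => by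
    refine Finset.sum_eq_zero fun m hm => Finset.sum_eq_zero fun q hq =>
      Finset.sum_eq_zero fun n hn => ?_
    simp [Nat.choose_eq_zero_of_lt (show a < p by omega)])]
  -- Stage 6: per p, swap m-sum and q-sum, then shrink the q-range
  refine Finset.sum_congr rfl fun p hp => ?_
  simp only [Finset.mem_range] at hp
  rw [Finset.sum_comm]
  rw [shrink (by omega : b + 1 ≤ b + 1 + (a + 1)) _ (fun q h1 h2 => by
    refine Finset.sum_eq_zero fun m hm => Finset.sum_eq_zero fun n hn => ?_
    simp [Nat.choose_eq_zero_of_lt (show b < q by omega)])]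
  -- Stage 7: apply the key identity for each (p, q)
  refine Finset.sum_congr rfl fun q hq => ?_
  simp only [Finset.mem_range] at hq
  have st7 : ∑ m ∈ range (p + 1), ∑ n ∈ range (q + 1),
      (((a.choose p * (p.choose m * n.choose (p - m)))
        * (b.choose q * (q.choose n * m.choose (q - n))) : ℕ) : Polynomial ℤ)
        * X ^ (m + n)
      = ((a.choose p * b.choose q : ℕ) : Polynomial ℤ)
        * ∑ m ∈ range (p + 1), ∑ n ∈ range (q + 1),
          ((p.choose m * q.choose n * (n.choose (p - m) * m.choose (q - n)) : ℕ) : Polynomial ℤ)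
            * X ^ (m + n) := by
    rw [Finset.mul_sum]
    refine Finset.sum_congr rfl fun m hm => ?_
    rw [Finset.mul_sum]
    refine Finset.sum_congr rfl fun n hn => ?_
    push_cast
    ring
  rw [st7, key p q]
  rw [(shrink (by omega : p + q + 1 ≤ a + b + 1) _ (fun i h1 h2 => by
    simp [Nat.choose_eq_zero_of_lt (show p < i by omega)])).symm]
  rw [Finset.mul_sum]
  refine Finset.sum_congr rfl fun i hi => ?_
  push_cast
  ring

theorem stmt_0 (a b : ℕ) :
    (1 + (X : Polynomial ℤ)) *
        ∑ i ∈ Finset.range (a + 1), ∑ j ∈ Finset.range (b + 1),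
          (C ((a.choose i * b.choose j * (a - i + j).choose j * (b + i - j).choose i : ℕ) : ℤ))
            * X ^ (i + j)
      = ∑ i ∈ Finset.range (min a b + 1),
          (C (((2 * i).choose i * a.choose i * b.choose i : ℕ) : ℤ)) * X ^ i
            * (1 + X) ^ (a + b + 1 - 2 * i) := by
  simp only [Polynomial.C_eq_natCast]
  rw [Lside a b, Rside a b]
end

section
/- For all natural numbers a, b ≥ 1, the polynomial identity (b-a)·h_{a,b}(t) = (1+t)·(b·h_{a,b-1}(t) - a·h_{a-1,b}(t)) holds, where h_{a,b}(t) := Σ_{i=0}^{min(a,b)} C(2i,i)·C(a,i)·C(b,i)·t^i·(1+t)^{a+b+1-2i}. -/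
open Polynomial Finset

/-- The `h^*`-polynomial of the symmetric edge polytope of `K_{a+1,b+1}`. -/
noncomputable def hPoly (a b : ℕ) : Polynomial ℤ :=
  ∑ i ∈ Finset.range (min a b + 1),
    C (((2 * i).choose i * a.choose i * b.choose i : ℕ) : ℤ) * X ^ i
      * (1 + X) ^ (a + b + 1 - 2 * i)

private lemma auxChoose (n k : ℕ) (hn : 1 ≤ n) :
    (n : ℤ) * ((n - 1).choose k) = ((n : ℤ) - k) * n.choose k := by
  rcases le_or_gt k n with h | h
  · have hnat : (n - 1).choose k * n = n.choose k * (n - k) := by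
      have := Nat.choose_mul_succ_eq (n - 1) k
      rwa [Nat.sub_add_cancel hn] at this
    have := congrArg (fun m : ℕ => (m : ℤ)) hnat
    push_cast [h] at this
    linarith
  · rw [Nat.choose_eq_zero_of_lt h, Nat.choose_eq_zero_of_lt (by omega)]
    simp

private lemma hPoly_eq (a b N : ℕ) (hN : min a b + 1 ≤ N) :
    hPoly a b = ∑ i ∈ Finset.range N,
      C (((2 * i).choose i * a.choose i * b.choose i : ℕ) : ℤ) * X ^ i
        * (1 + X) ^ (a + b + 1 - 2 * i) := by
  unfold hPoly
  apply Finset.sum_subset (Finset.range_subset_range.mpr hN)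
  intro i hi hni
  simp only [Finset.mem_range, not_lt] at hi hni
  have : a < i ∨ b < i := by omega
  rcases this with h | h <;>
    simp [Nat.choose_eq_zero_of_lt h]

theorem stmt_1 (a b : ℕ) (ha : 1 ≤ a) (hb : 1 ≤ b) :
    C ((b : ℤ) - (a : ℤ)) * hPoly a b
      = (1 + X) * (C (b : ℤ) * hPoly a (b - 1) - C (a : ℤ) * hPoly (a - 1) b) := by
  rw [hPoly_eq a b (a + b + 1) (by omega), hPoly_eq a (b - 1) (a + b + 1) (by omega),
    hPoly_eq (a - 1) b (a + b + 1) (by omega)]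
  simp only [show a + (b - 1) + 1 = a + b from by omega,
    show (a - 1) + b + 1 = a + b from by omega]
  rw [Finset.mul_sum, Finset.mul_sum, Finset.mul_sum, ← Finset.sum_sub_distrib,
    Finset.mul_sum]
  apply Finset.sum_congr rfl
  intro i hi
  simp only [Finset.mem_range] at hi
  rcases le_or_gt (2 * i) (a + b) with h2 | h2
  · have he : a + b + 1 - 2 * i = (a + b - 2 * i) + 1 := by omega
    rw [he]
    have key : C ((b : ℤ) - a) * C (((2 * i).choose i * a.choose i * b.choose i : ℕ) : ℤ)
        = C (b : ℤ) * C (((2 * i).choose i * a.choose i * (b - 1).choose i : ℕ) : ℤ)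
          - C (a : ℤ) * C (((2 * i).choose i * (a - 1).choose i * b.choose i : ℕ) : ℤ) := by
      rw [← C_mul, ← C_mul, ← C_mul, ← C_sub]
      congr 1
      have hA := auxChoose a i ha
      have hB := auxChoose b i hb
      push_cast
      linear_combination (((2 * i).choose i : ℤ) * b.choose i) * hA
        - (((2 * i).choose i : ℤ) * a.choose i) * hB
    linear_combination (X ^ i * (1 + X) ^ (a + b - 2 * i + 1) : Polynomial ℤ) * key
  · have hmin : a < i ∨ b < i := by omega
    rcases hmin with h | h
    · simp [Nat.choose_eq_zero_of_lt h, Nat.choose_eq_zero_of_lt (show a - 1 < i by omega)]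
    · simp [Nat.choose_eq_zero_of_lt h, Nat.choose_eq_zero_of_lt (show b - 1 < i by omega)]
end

section
/- Let f_1, f_2 be γ-positive real polynomials with γ-polynomials γ_1, γ_2 respectively (i.e., f_i(t) = Σ_j γ_{i,j} t^j (1+t)^{deg f_i - 2j} with all γ_{i,j} ≥ 0), such that deg f_2 = deg f_1 + 1, f_1(0) ≠ 0, f_2(0) ≠ 0, and γ_1 interlaces γ_2. Then f_1 interlaces f_2. -/
open Polynomial Finset

/-- `Interlaces g f` : both `f` and `g` are real-rooted (they split over `ℝ`) and their
roots, listed in decreasing order `a 0 ≥ a 1 ≥ ⋯` (for `f`) and `b 0 ≥ b 1 ≥ ⋯` (for `g`),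
satisfy `a 0 ≥ b 0 ≥ a 1 ≥ b 1 ≥ ⋯`. -/
def Interlaces (g f : Polynomial ℝ) : Prop :=
  ∃ (df dg : ℕ) (a : ℕ → ℝ) (b : ℕ → ℝ) (cf cg : ℝ),
    cf ≠ 0 ∧ cg ≠ 0 ∧
    f = C cf * ∏ i ∈ Finset.range df, (X - C (a i)) ∧
    g = C cg * ∏ i ∈ Finset.range dg, (X - C (b i)) ∧
    dg ≤ df ∧ df ≤ dg + 1 ∧
    (∀ i, i < dg → b i ≤ a i) ∧
    (∀ i, i + 1 < df → a (i + 1) ≤ b i)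


noncomputable def tp (u : ℝ) : ℝ := (1 - 2*u - Real.sqrt (1 - 4*u)) / (2*u)
noncomputable def tm (u : ℝ) : ℝ := (1 - 2*u + Real.sqrt (1 - 4*u)) / (2*u)

lemma sq_s {u : ℝ} (hu : u < 0) : (Real.sqrt (1 - 4*u))^2 = 1 - 4*u :=
  Real.sq_sqrt (by linarith)

lemma s_gt {u : ℝ} (hu : u < 0) : 1 < Real.sqrt (1 - 4*u) :=
  (Real.lt_sqrt (by norm_num)).2 (by nlinarith)

lemma tp_neg {u : ℝ} (hu : u < 0) : tp u < 0 := by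
  have hs := sq_s hu; have hs1 := s_gt hu
  unfold tp
  apply div_neg_of_pos_of_neg _ (by linarith)
  nlinarith [hs, hs1]

lemma tp_gt {u : ℝ} (hu : u < 0) : -1 < tp u := by
  have hs1 := s_gt hu
  have h2u : (2*u) ≠ 0 := by linarith
  have h : tp u + 1 = (1 - Real.sqrt (1 - 4*u))/(2*u) := by
    have hu0 : u ≠ 0 := hu.ne
    unfold tp; field_simp; ring
  have : (0:ℝ) < (1 - Real.sqrt (1 - 4*u))/(2*u) :=
    div_pos_of_neg_of_neg (by linarith) (by linarith)
  linarith [h ▸ this]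

lemma tm_lt {u : ℝ} (hu : u < 0) : tm u < -1 := by
  have hs1 := s_gt hu
  have h2u : (2*u) ≠ 0 := by linarith
  have h : tm u + 1 = (1 + Real.sqrt (1 - 4*u))/(2*u) := by
    have hu0 : u ≠ 0 := hu.ne
    unfold tm; field_simp; ring
  have : (1 + Real.sqrt (1 - 4*u))/(2*u) < 0 :=
    div_neg_of_pos_of_neg (by linarith) (by linarith)
  linarith [h ▸ this]

lemma tp_key {u : ℝ} (hu : u < 0) : u * (1 + tp u)^2 = tp u := by
  have hs := sq_s hu
  set s := Real.sqrt (1 - 4*u) with hsdef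
  have h2u : (2*u) ≠ 0 := by linarith
  unfold tp
  have hu0 : u ≠ 0 := hu.ne
  rw [← hsdef]
  field_simp
  linear_combination hs

lemma tm_key {u : ℝ} (hu : u < 0) : u * (1 + tm u)^2 = tm u := by
  have hs := sq_s hu
  set s := Real.sqrt (1 - 4*u) with hsdef
  have h2u : (2*u) ≠ 0 := by linarith
  unfold tm
  have hu0 : u ≠ 0 := hu.ne
  rw [← hsdef]
  field_simp
  linear_combination hs

lemma tp_mono {u u' : ℝ} (hu : u < 0) (hu' : u' < 0) (h : u ≤ u') : tp u ≤ tp u' := by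
  by_contra hc
  push_neg at hc
  have k1 := tp_key hu; have k2 := tp_key hu'
  have b1 := tp_gt hu; have b2 := tp_gt hu'
  have b3 := tp_neg hu; have b4 := tp_neg hu'
  set t := tp u; set t' := tp u'
  have e2 : (u - u')*((1+t)^2*(1+t')^2) = (t - t')*(1 - t*t') := by
    linear_combination (1+t')^2 * k1 - (1+t)^2 * k2
  nlinarith [mul_pos (mul_pos (show (0:ℝ) < 1+t by linarith) (show (0:ℝ) < 1+t by linarith))
      (mul_pos (show (0:ℝ) < 1+t' by linarith) (show (0:ℝ) < 1+t' by linarith)),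
    mul_pos (show (0:ℝ) < t - t' by linarith) (show (0:ℝ) < 1 - t*t' by nlinarith)]

lemma tm_anti {u u' : ℝ} (hu : u < 0) (hu' : u' < 0) (h : u ≤ u') : tm u' ≤ tm u := by
  by_contra hc
  push_neg at hc
  have k1 := tm_key hu; have k2 := tm_key hu'
  have b1 := tm_lt hu; have b2 := tm_lt hu'
  set t := tm u; set t' := tm u'
  have e2 : (u - u')*((1+t)^2*(1+t')^2) = (t - t')*(1 - t*t') := by
    linear_combination (1+t')^2 * k1 - (1+t)^2 * k2
  nlinarith [mul_pos (mul_pos (show (0:ℝ) < -(1+t) by linarith) (show (0:ℝ) < -(1+t) by linarith))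
      (mul_pos (show (0:ℝ) < -(1+t') by linarith) (show (0:ℝ) < -(1+t') by linarith)),
    mul_pos (show (0:ℝ) < t' - t by linarith) (show (0:ℝ) < t*t' - 1 by nlinarith)]

noncomputable def arr (m d : ℕ) (u : ℕ → ℝ) (i : ℕ) : ℝ :=
  if i < m then tp (u i) else if i < d - m then -1 else tm (u (d - 1 - i))

lemma tp_add_tm {u : ℝ} (hu : u < 0) : u * (tp u + tm u) = 1 - 2*u := by
  have hs : (Real.sqrt (1 - 4*u))^2 = 1 - 4*u := Real.sq_sqrt (by linarith)
  set s := Real.sqrt (1 - 4*u)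
  have h2u : (2*u) ≠ 0 := by linarith
  have hu0 : u ≠ 0 := hu.ne
  unfold tp tm
  field_simp
  ring

lemma tp_mul_tm {u : ℝ} (hu : u < 0) : tp u * tm u = 1 := by
  have hs : (Real.sqrt (1 - 4*u))^2 = 1 - 4*u := Real.sq_sqrt (by linarith)
  set s := Real.sqrt (1 - 4*u)
  have h2u : (2*u) ≠ 0 := by linarith
  have hu0 : u ≠ 0 := hu.ne
  unfold tp tm
  field_simp
  linear_combination -Real.sq_sqrt (show (0:ℝ) ≤ 1 - u*4 by linarith)

lemma quad {u : ℝ} (hu : u < 0) :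
    X - C u * (1+X)^2 = C (-u) * ((X - C (tp u)) * (X - C (tm u))) := by
  have H1 : (C (u * (tp u + tm u)) : ℝ[X]) = C (1 - 2*u) := by rw [tp_add_tm hu]
  have H2 : (C (tp u * tm u) : ℝ[X]) = 1 := by rw [tp_mul_tm hu, map_one]
  simp only [map_mul, map_add, map_sub, map_one, map_neg, map_ofNat] at H1 H2 ⊢
  linear_combination (-(X : ℝ[X])) * H1 + C u * H2

lemma prod_arr (m d : ℕ) (hm : 2*m ≤ d) (u : ℕ → ℝ) :
    ∏ i ∈ range d, (X - C (arr m d u i))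
      = ((∏ i ∈ range m, (X - C (tp (u i)))) * (1+X)^(d-2*m)) *
        ∏ i ∈ range m, (X - C (tm (u i))) := by
  rw [show (range d) = range ((m + (d - 2*m)) + m) by congr 1; omega,
    Finset.prod_range_add, Finset.prod_range_add]
  congr 1
  · congr 1
    · apply Finset.prod_congr rfl
      intro i hi
      rw [mem_range] at hi
      have : arr m d u i = tp (u i) := by unfold arr; rw [if_pos hi]
      rw [this]
    · rw [show ((1:ℝ[X])+X)^(d-2*m) = ∏ _i ∈ range (d-2*m), ((X:ℝ[X]) + 1) by
        rw [Finset.prod_const, card_range]; ring]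
      apply Finset.prod_congr rfl
      intro i hi
      rw [mem_range] at hi
      have : arr m d u (m + i) = -1 := by
        unfold arr; rw [if_neg (by omega), if_pos (by omega)]
      rw [this]
      simp [sub_neg_eq_add, add_comm]
  · rw [← Finset.prod_range_reflect]
    apply Finset.prod_congr rfl
    intro i hi
    rw [mem_range] at hi
    have : arr m d u (m + (d - 2*m) + (m - 1 - i)) = tm (u i) := by
      unfold arr
      rw [if_neg (by omega), if_neg (by omega)]
      congr 2
      omega
    rw [this]

lemma homog_eval (g : ℝ[X]) (m : ℕ) (hg : g.natDegree < m + 1) (x w : ℝ) (hw : w ≠ 0) :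
    ∑ j ∈ range (m+1), g.coeff j * x^j * w^(m-j) = w^m * g.eval (x/w) := by
  rw [eval_eq_sum_range' hg, Finset.mul_sum]
  apply Finset.sum_congr rfl
  intro j hj
  rw [mem_range] at hj
  have hwj : w^(m-j) * w^j = w^m := by rw [← pow_add]; congr 1; omega
  rw [div_pow, ← hwj]
  field_simp

lemma homog (g : ℝ[X]) (c : ℝ) (u : ℕ → ℝ) (m d : ℕ) (hm : 2*m ≤ d)
    (hgf : g = C c * ∏ i ∈ range m, (X - C (u i))) :
    ∑ j ∈ range (m+1), C (g.coeff j) * X^j * (1+X)^(d-2*j)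
      = C c * ((1+X)^(d-2*m) * ∏ i ∈ range m, (X - C (u i) * (1+X)^2)) := by
  have hnd : g.natDegree < m + 1 := by
    rw [hgf]
    calc (C c * ∏ i ∈ range m, (X - C (u i))).natDegree
        ≤ (∏ i ∈ range m, (X - C (u i))).natDegree := natDegree_C_mul_le c _
      _ ≤ ∑ i ∈ range m, (X - C (u i)).natDegree := natDegree_prod_le _ _
      _ ≤ m := by simp [natDegree_X_sub_C]
      _ < m + 1 := by omega
  apply eq_of_infinite_eval_eq
  apply Set.Infinite.mono (s := {x : ℝ | x ≠ -1})
  swap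
  · exact Set.Finite.infinite_compl (Set.finite_singleton (-1))
  intro x hx
  simp only [Set.mem_setOf_eq] at hx ⊢
  have hx1 : 1 + x ≠ 0 := fun h => hx (by linarith)
  have hw : (1+x)^2 ≠ 0 := pow_ne_zero _ hx1
  simp only [eval_finset_sum, eval_mul, eval_pow, eval_add, eval_one, eval_C, eval_X, eval_prod,
    eval_sub]
  have step1 : ∀ j ∈ range (m+1),
      g.coeff j * x^j * (1+x)^(d-2*j) = (1+x)^(d-2*m) * (g.coeff j * x^j * ((1+x)^2)^(m-j)) := by
    intro j hj
    rw [mem_range] at hj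
    rw [show d - 2*j = (d - 2*m) + 2*(m-j) by omega, pow_add, pow_mul]
    ring
  rw [Finset.sum_congr rfl step1, ← Finset.mul_sum,
    homog_eval g m hnd x ((1+x)^2) hw, hgf]
  simp only [eval_mul, eval_prod, eval_sub, eval_C, eval_X]
  rw [show ((1+x)^2)^m = ∏ _i ∈ range m, (1+x)^2 by rw [Finset.prod_const, card_range]]
  have key : (∏ _i ∈ range m, ((1+x)^2)) * (∏ i ∈ range m, (x/((1+x)^2) - u i))
      = ∏ i ∈ range m, (x - u i * (1+x)^2) := by
    rw [← Finset.prod_mul_distrib]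
    apply Finset.prod_congr rfl
    intro i _
    field_simp
  rw [← key]
  ring

lemma assemble (c : ℝ) (m d : ℕ) (hm : 2*m ≤ d) (u : ℕ → ℝ) (hu : ∀ i, i < m → u i < 0) :
    C c * ((1+X)^(d-2*m) * ∏ i ∈ range m, (X - C (u i) * (1+X)^2))
      = C (c * ∏ i ∈ range m, (-(u i))) * ∏ i ∈ range d, (X - C (arr m d u i)) := by
  rw [prod_arr m d hm u]
  have hq : ∀ i ∈ range m, ((X:ℝ[X]) - C (u i) * (1+X)^2)
      = C (-(u i)) * ((X - C (tp (u i))) * (X - C (tm (u i)))) := by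
    intro i hi
    rw [mem_range] at hi
    exact quad (hu i hi)
  rw [Finset.prod_congr rfl hq, Finset.prod_mul_distrib,
    show (∏ i ∈ range m, (C (-(u i)) : ℝ[X])) = C (∏ i ∈ range m, (-(u i))) by
      rw [map_prod], Finset.prod_mul_distrib, map_mul]
  ring

section Compare

variable {m₁ m₂ d₁ : ℕ} {v u : ℕ → ℝ}

lemma arr_le₁ (h2m₁ : 2*m₁ ≤ d₁) (h2m₂ : 2*m₂ ≤ d₁+1)
    (hm : m₁ ≤ m₂) (hm' : m₂ ≤ m₁+1)
    (hv : ∀ i, i < m₁ → v i < 0) (hu : ∀ i, i < m₂ → u i < 0)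
    (hb : ∀ i, i < m₁ → v i ≤ u i) (hab : ∀ i, i+1 < m₂ → u (i+1) ≤ v i) :
    ∀ i, i < d₁ → arr m₁ d₁ v i ≤ arr m₂ (d₁+1) u i := by
  intro i hi
  unfold arr
  split_ifs with hB1 hA1 hA2 hB2 hA1' hA2' hA1'' hA2''
  · exact tp_mono (hv i hB1) (hu i hA1) (hb i hB1)
  · omega
  · -- B = tp, A = tm : impossible
    omega
  · -- B = -1, A = tp
    exact le_of_lt (tp_gt (hu i hA1'))
  · exact le_rfl
  · -- B = -1, A = tm : impossible
    omega
  · -- B = tm, A = tp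
    have h1 : tm (v (d₁ - 1 - i)) < -1 := tm_lt (hv _ (by omega))
    have h2 : -1 < tp (u i) := tp_gt (hu i hA1'')
    linarith
  · -- B = tm, A = -1
    exact le_of_lt (tm_lt (hv _ (by omega)))
  · -- B = tm, A = tm
    have hk : (d₁ + 1 - 1 - i) = (d₁ - 1 - i) + 1 := by omega
    rw [hk]
    exact tm_anti (hu _ (by omega)) (hv _ (by omega)) (hab _ (by omega))

lemma arr_le₂ (h2m₁ : 2*m₁ ≤ d₁) (h2m₂ : 2*m₂ ≤ d₁+1)
    (hm : m₁ ≤ m₂) (hm' : m₂ ≤ m₁+1)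
    (hv : ∀ i, i < m₁ → v i < 0) (hu : ∀ i, i < m₂ → u i < 0)
    (hb : ∀ i, i < m₁ → v i ≤ u i) (hab : ∀ i, i+1 < m₂ → u (i+1) ≤ v i) :
    ∀ i, i + 1 < d₁+1 → arr m₂ (d₁+1) u (i+1) ≤ arr m₁ d₁ v i := by
  intro i hi
  unfold arr
  split_ifs with hA1 hB1 hB2 hA2 hB1' hB2' hB1'' hB2''
  · exact tp_mono (hu _ hA1) (hv i hB1) (hab i hA1)
  · omega
  · omega
  · -- A = -1, B = tp
    exact le_of_lt (tp_gt (hv i hB1'))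
  · exact le_rfl
  · -- A = -1, B = tm : impossible
    omega
  · -- A = tm, B = tp
    have h1 : tm (u (d₁ + 1 - 1 - (i+1))) < -1 := tm_lt (hu _ (by omega))
    have h2 : -1 < tp (v i) := tp_gt (hv i hB1'')
    linarith
  · -- A = tm, B = -1
    exact le_of_lt (tm_lt (hu _ (by omega)))
  · -- A = tm, B = tm
    have hk : (d₁ + 1 - 1 - (i+1)) = d₁ - 1 - i := by omega
    rw [hk]
    exact tm_anti (hv _ (by omega)) (hu _ (by omega)) (hb _ (by omega))

end Compare

lemma eval_pos_of_nonneg (g : ℝ[X]) (h : ∀ j, 0 ≤ g.coeff j) (h0 : 0 < g.coeff 0)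
    (r : ℝ) (hr : 0 ≤ r) : 0 < g.eval r := by
  rw [eval_eq_sum_range]
  have h1 : g.coeff 0 * r^0 ≤ ∑ j ∈ range (g.natDegree + 1), g.coeff j * r^j := by
    apply Finset.single_le_sum (f := fun j => g.coeff j * r^j)
    · intro j _
      exact mul_nonneg (h j) (pow_nonneg hr j)
    · simp
  simpa using lt_of_lt_of_le (by simpa using h0) h1

theorem stmt_8 (f₁ f₂ g₁ g₂ : Polynomial ℝ)
    (hg₁ : ∀ j, 0 ≤ g₁.coeff j) (hg₂ : ∀ j, 0 ≤ g₂.coeff j)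
    (hd₁ : 2 * g₁.natDegree ≤ f₁.natDegree) (hd₂ : 2 * g₂.natDegree ≤ f₂.natDegree)
    (hf₁ : f₁ = ∑ j ∈ Finset.range (g₁.natDegree + 1),
      C (g₁.coeff j) * X ^ j * (1 + X) ^ (f₁.natDegree - 2 * j))
    (hf₂ : f₂ = ∑ j ∈ Finset.range (g₂.natDegree + 1),
      C (g₂.coeff j) * X ^ j * (1 + X) ^ (f₂.natDegree - 2 * j))
    (hdeg : f₂.natDegree = f₁.natDegree + 1)
    (h₁0 : f₁.eval 0 ≠ 0) (h₂0 : f₂.eval 0 ≠ 0)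
    (hint : Interlaces g₁ g₂) :
    Interlaces f₁ f₂ := by
  obtain ⟨m₂, m₁, u, v, c₂, c₁, hc₂, hc₁, hg₂f, hg₁f, hm12, hm21, hb, hab⟩ := hint
  have hnd₂ : g₂.natDegree = m₂ := by
    rw [hg₂f, natDegree_C_mul hc₂,
      natDegree_prod _ _ (fun i _ => X_sub_C_ne_zero (u i))]
    simp
  have hnd₁ : g₁.natDegree = m₁ := by
    rw [hg₁f, natDegree_C_mul hc₁,
      natDegree_prod _ _ (fun i _ => X_sub_C_ne_zero (v i))]
    simp
  have he₂ : f₂.eval 0 = g₂.coeff 0 := by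
    conv_lhs => rw [hf₂]
    rw [eval_finset_sum, Finset.sum_eq_single 0]
    · simp
    · intro j _ hj
      simp [zero_pow hj]
    · simp
  have he₁ : f₁.eval 0 = g₁.coeff 0 := by
    conv_lhs => rw [hf₁]
    rw [eval_finset_sum, Finset.sum_eq_single 0]
    · simp
    · intro j _ hj
      simp [zero_pow hj]
    · simp
  have h20 : 0 < g₂.coeff 0 := lt_of_le_of_ne (hg₂ 0) (fun h => h₂0 (by rw [he₂, ← h]))
  have h10 : 0 < g₁.coeff 0 := lt_of_le_of_ne (hg₁ 0) (fun h => h₁0 (by rw [he₁, ← h]))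
  have hu_neg : ∀ i, i < m₂ → u i < 0 := by
    intro i hi
    by_contra h
    push_neg at h
    have h0 : g₂.eval (u i) = 0 := by
      rw [hg₂f, eval_mul, eval_prod]
      apply mul_eq_zero_of_right
      apply Finset.prod_eq_zero (Finset.mem_range.2 hi)
      simp
    exact absurd h0 (ne_of_gt (eval_pos_of_nonneg g₂ hg₂ h20 (u i) h))
  have hv_neg : ∀ i, i < m₁ → v i < 0 := by
    intro i hi
    by_contra h
    push_neg at h
    have h0 : g₁.eval (v i) = 0 := by
      rw [hg₁f, eval_mul, eval_prod]
      apply mul_eq_zero_of_right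
      apply Finset.prod_eq_zero (Finset.mem_range.2 hi)
      simp
    exact absurd h0 (ne_of_gt (eval_pos_of_nonneg g₁ hg₁ h10 (v i) h))
  have hd2' : 2*m₂ ≤ f₂.natDegree := by rw [← hnd₂]; omega
  have hd1' : 2*m₁ ≤ f₁.natDegree := by rw [← hnd₁]; omega
  have hf₂' : f₂ = C (c₂ * ∏ i ∈ range m₂, (-(u i))) *
      ∏ i ∈ range f₂.natDegree, (X - C (arr m₂ f₂.natDegree u i)) := by
    conv_lhs => rw [hf₂]
    rw [hnd₂, homog g₂ c₂ u m₂ f₂.natDegree hd2' hg₂f,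
      assemble c₂ m₂ f₂.natDegree hd2' u hu_neg]
  have hf₁' : f₁ = C (c₁ * ∏ i ∈ range m₁, (-(v i))) *
      ∏ i ∈ range f₁.natDegree, (X - C (arr m₁ f₁.natDegree v i)) := by
    conv_lhs => rw [hf₁]
    rw [hnd₁, homog g₁ c₁ v m₁ f₁.natDegree hd1' hg₁f,
      assemble c₁ m₁ f₁.natDegree hd1' v hv_neg]
  refine ⟨f₂.natDegree, f₁.natDegree, arr m₂ f₂.natDegree u, arr m₁ f₁.natDegree v,
    c₂ * ∏ i ∈ range m₂, (-(u i)), c₁ * ∏ i ∈ range m₁, (-(v i)),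
    ?_, ?_, hf₂', hf₁', by omega, by omega, ?_, ?_⟩
  · exact mul_ne_zero hc₂ (Finset.prod_ne_zero_iff.2
      (fun i hi => by have := hu_neg i (Finset.mem_range.1 hi); intro h; linarith
        [neg_eq_zero.1 h]))
  · exact mul_ne_zero hc₁ (Finset.prod_ne_zero_iff.2
      (fun i hi => by have := hv_neg i (Finset.mem_range.1 hi); intro h; linarith
        [neg_eq_zero.1 h]))
  · rw [hdeg]
    exact arr_le₁ hd1' (by omega) hm12 hm21 hv_neg hu_neg hb hab
  · rw [hdeg]
    exact arr_le₂ hd1' (by omega) hm12 hm21 hv_neg hu_neg hb hab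
end

section
/- For all natural numbers a, b ≥ 1, the polynomial Σ_{i=0}^{min(a,b)} C(2i,i)·C(a,i)·C(b,i)·t^i is the f-polynomial of a flag balanced simplicial complex; explicitly, the simplicial complex Δ on vertex set {x_{i,j} : 1≤i≤a, 1≤j≤b} ∪ {y_{i,j} : 1≤i≤a, 1≤j≤b} whose faces are the subsets containing none of the following pairs: {x_{i,j}, x_{i',j'}} with i≤i' and j≥j'; {y_{i,j}, y_{i',j'}} with i≤i' and j≥j'; {x_{i,j}, y_{i',j}} for any i,i',j; {x_{i,j}, y_{i,j'}} for any i,j,j', satisfies: the number of faces of Δ with exactly k vertices equals C(2k,k)·C(a,k)·C(b,k) for every k ≥ 0. -/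
open Finset

section Chains

variable {α β : Type*} [LinearOrder α] [LinearOrder β] [DecidableEq α] [DecidableEq β]

/-- A "staircase chain": any two distinct elements are strictly increasing in both coordinates. -/
def Chainy (X : Finset (α × β)) : Prop :=
  ∀ p ∈ X, ∀ q ∈ X, p ≠ q → ¬(p.1 ≤ q.1 ∧ q.2 ≤ p.2)

lemma Chainy.lt_snd {X : Finset (α × β)} (hX : Chainy X) {p q : α × β}
    (hp : p ∈ X) (hq : q ∈ X) (h : p.1 < q.1) : p.2 < q.2 := by
  by_contra hc
  push_neg at hc
  exact hX p hp q hq (fun e => absurd (congrArg Prod.fst e) h.ne) ⟨h.le, hc⟩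

lemma Chainy.fst_injOn {X : Finset (α × β)} (hX : Chainy X) :
    Set.InjOn Prod.fst (X : Set (α × β)) := by
  intro p hp q hq h
  by_contra hne
  have h1 := hX p hp q hq hne ⟨le_of_eq h, le_of_lt ?_⟩
  · exact h1
  · by_contra hc
    push_neg at hc
    exact hX q hq p hp (Ne.symm hne) ⟨le_of_eq h.symm, hc⟩

lemma Chainy.snd_injOn {X : Finset (α × β)} (hX : Chainy X) :
    Set.InjOn Prod.snd (X : Set (α × β)) := by
  intro p hp q hq h
  by_contra hne
  rcases lt_trichotomy p.1 q.1 with h1 | h1 | h1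
  · exact absurd h (hX.lt_snd hp hq h1).ne
  · exact hne (Prod.ext h1 h)
  · exact absurd h.symm (hX.lt_snd hq hp h1).ne

lemma Chainy.card_image_fst {X : Finset (α × β)} (hX : Chainy X) :
    (X.image Prod.fst).card = X.card :=
  Finset.card_image_of_injOn hX.fst_injOn

lemma Chainy.card_image_snd {X : Finset (α × β)} (hX : Chainy X) :
    (X.image Prod.snd).card = X.card :=
  Finset.card_image_of_injOn hX.snd_injOn

/-- A chain is determined by its two coordinate projections. -/
lemma Chainy.ext {X Y : Finset (α × β)} (hX : Chainy X) (hY : Chainy Y)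
    (h1 : X.image Prod.fst = Y.image Prod.fst)
    (h2 : X.image Prod.snd = Y.image Prod.snd) : X = Y := by
  suffices H : ∀ n (X Y : Finset (α × β)), Chainy X → Chainy Y →
      X.image Prod.fst = Y.image Prod.fst → X.image Prod.snd = Y.image Prod.snd →
      X.card = n → X = Y from H X.card X Y hX hY h1 h2 rfl
  clear hX hY h1 h2 X Y
  intro n
  induction n using Nat.strong_induction_on with
  | _ n ih =>
  intro X Y hX hY h1 h2 hn
  rcases X.eq_empty_or_nonempty with rfl | hXne
  · have : Y.image Prod.fst = ∅ := by simpa using h1.symm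
    simpa using (Finset.image_eq_empty.mp this).symm
  · have hYne : Y.Nonempty := by
      rw [← Finset.image_nonempty (f := Prod.fst), ← h1, Finset.image_nonempty]
      exact hXne
    -- the element of X with maximal first coordinate
    obtain ⟨p, hpX, hpmax⟩ := X.exists_max_image Prod.fst hXne
    obtain ⟨q, hqY, hqmax⟩ := Y.exists_max_image Prod.fst hYne
    -- p is maximal in both coordinates
    have hpmax2 : ∀ r ∈ X, r.2 ≤ p.2 := by
      intro r hr
      rcases eq_or_ne r p with rfl | hne
      · exact le_rfl
      · have : r.1 < p.1 := lt_of_le_of_ne (hpmax r hr)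
          (fun e => hne (hX.fst_injOn hr hpX e))
        exact (hX.lt_snd hr hpX this).le
    have hqmax2 : ∀ r ∈ Y, r.2 ≤ q.2 := by
      intro r hr
      rcases eq_or_ne r q with rfl | hne
      · exact le_rfl
      · have : r.1 < q.1 := lt_of_le_of_ne (hqmax r hr)
          (fun e => hne (hY.fst_injOn hr hqY e))
        exact (hY.lt_snd hr hqY this).le
    -- p = q
    have hpq : p = q := by
      have hf : p.1 = q.1 := by
        have h1' : p.1 ∈ Y.image Prod.fst := h1 ▸ Finset.mem_image_of_mem _ hpX
        have h2' : q.1 ∈ X.image Prod.fst := h1.symm ▸ Finset.mem_image_of_mem _ hqY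
        obtain ⟨r, hrY, hr⟩ := Finset.mem_image.mp h1'
        obtain ⟨s, hsX, hs⟩ := Finset.mem_image.mp h2'
        exact le_antisymm (hr ▸ hqmax r hrY) (hs ▸ hpmax s hsX)
      have hsnd : p.2 = q.2 := by
        have h1' : p.2 ∈ Y.image Prod.snd := h2 ▸ Finset.mem_image_of_mem _ hpX
        have h2' : q.2 ∈ X.image Prod.snd := h2.symm ▸ Finset.mem_image_of_mem _ hqY
        obtain ⟨r, hrY, hr⟩ := Finset.mem_image.mp h1'
        obtain ⟨s, hsX, hs⟩ := Finset.mem_image.mp h2'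
        exact le_antisymm (hr ▸ hqmax2 r hrY) (hs ▸ hpmax2 s hsX)
      exact Prod.ext hf hsnd
    subst hpq
    -- erase p and recurse
    have himg : ∀ (Z : Finset (α × β)), Chainy Z → p ∈ Z →
        ((Z.erase p).image Prod.fst) = (Z.image Prod.fst).erase p.1 := by
      intro Z hZ hpZ
      ext x
      simp only [Finset.mem_image, Finset.mem_erase]
      constructor
      · rintro ⟨r, ⟨hrne, hrZ⟩, rfl⟩
        exact ⟨fun e => hrne (hZ.fst_injOn hrZ hpZ e), r, hrZ, rfl⟩
      · rintro ⟨hne, r, hrZ, rfl⟩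
        exact ⟨r, ⟨fun e => hne (congrArg Prod.fst e), hrZ⟩, rfl⟩
    have himg2 : ∀ (Z : Finset (α × β)), Chainy Z → p ∈ Z →
        ((Z.erase p).image Prod.snd) = (Z.image Prod.snd).erase p.2 := by
      intro Z hZ hpZ
      ext x
      simp only [Finset.mem_image, Finset.mem_erase]
      constructor
      · rintro ⟨r, ⟨hrne, hrZ⟩, rfl⟩
        exact ⟨fun e => hrne (hZ.snd_injOn hrZ hpZ e), r, hrZ, rfl⟩
      · rintro ⟨hne, r, hrZ, rfl⟩
        exact ⟨r, ⟨fun e => hne (congrArg Prod.snd e), hrZ⟩, rfl⟩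
    have hXe : Chainy (X.erase p) := fun r hr s hs => hX r (Finset.mem_of_mem_erase hr) s (Finset.mem_of_mem_erase hs)
    have hYe : Chainy (Y.erase p) := fun r hr s hs => hY r (Finset.mem_of_mem_erase hr) s (Finset.mem_of_mem_erase hs)
    have key : X.erase p = Y.erase p := by
      refine ih (X.erase p).card ?_ _ _ hXe hYe ?_ ?_ rfl
      · exact hn ▸ Finset.card_erase_lt_of_mem hpX
      · rw [himg X hX hpX, himg Y hY hqY, h1]
      · rw [himg2 X hX hpX, himg2 Y hY hqY, h2]
    have := congrArg (insert p) key
    rwa [Finset.insert_erase hpX, Finset.insert_erase hqY] at this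

end Chains

section ChainOf
variable {α β : Type*} [LinearOrder α] [LinearOrder β] [DecidableEq α] [DecidableEq β]

/-- The unique staircase chain with given coordinate projections. -/
def chainOf (R : Finset α) (C : Finset β) (h : C.card = R.card) : Finset (α × β) :=
  (univ : Finset (Fin R.card)).image
    (fun i => (R.orderEmbOfFin rfl i, C.orderEmbOfFin h i))

lemma chainOf_chainy (R : Finset α) (C : Finset β) (h : C.card = R.card) :
    Chainy (chainOf R C h) := by
  intro p hp q hq hne ⟨hle1, hle2⟩
  simp only [chainOf, mem_image, mem_univ, true_and] at hp hq
  obtain ⟨i, rfl⟩ := hp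
  obtain ⟨j, rfl⟩ := hq
  have hij : i ≤ j := (R.orderEmbOfFin rfl).le_iff_le.mp hle1
  have hji : j ≤ i := (C.orderEmbOfFin h).le_iff_le.mp hle2
  exact hne (by rw [le_antisymm hij hji])

lemma chainOf_image_fst (R : Finset α) (C : Finset β) (h : C.card = R.card) :
    (chainOf R C h).image Prod.fst = R := by
  ext x
  simp only [chainOf, Finset.image_image, mem_image, mem_univ, true_and, Function.comp]
  constructor
  · rintro ⟨i, rfl⟩
    exact R.orderEmbOfFin_mem rfl i
  · intro hx
    have : x ∈ Set.range (R.orderEmbOfFin rfl) := by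
      rw [Finset.range_orderEmbOfFin]; exact hx
    obtain ⟨i, hi⟩ := this
    exact ⟨i, hi⟩

lemma chainOf_image_snd (R : Finset α) (C : Finset β) (h : C.card = R.card) :
    (chainOf R C h).image Prod.snd = C := by
  ext x
  simp only [chainOf, Finset.image_image, mem_image, mem_univ, true_and, Function.comp]
  constructor
  · rintro ⟨i, rfl⟩
    exact C.orderEmbOfFin_mem h i
  · intro hx
    have : x ∈ Set.range (C.orderEmbOfFin h) := by
      rw [Finset.range_orderEmbOfFin]; exact hx
    obtain ⟨i, hi⟩ := this
    exact ⟨i, hi⟩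

lemma chainOf_card (R : Finset α) (C : Finset β) (h : C.card = R.card) :
    (chainOf R C h).card = R.card := by
  rw [chainOf, Finset.card_image_of_injective _ (fun i j hij => ?_), card_univ, Fintype.card_fin]
  exact (R.orderEmbOfFin rfl).injective (congrArg Prod.fst hij)

end ChainOf

def disjPairs (n m l : ℕ) : Finset (Finset (Fin n) × Finset (Fin n)) :=
  ((univ : Finset (Finset (Fin n))) ×ˢ univ).filter
    fun RS => RS.1.card = m ∧ RS.2.card = l ∧ Disjoint RS.1 RS.2

lemma card_disjPairs (n m l : ℕ) :
    (disjPairs n m l).card = n.choose m * (n - m).choose l := by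
  have key : disjPairs n m l =
      (powersetCard m (univ : Finset (Fin n))).biUnion
        (fun R => {R} ×ˢ powersetCard l Rᶜ) := by
    ext ⟨R, S⟩
    simp only [disjPairs, mem_filter, mem_product, mem_univ, true_and, mem_biUnion,
      mem_powersetCard, mem_singleton, Finset.subset_univ]
    constructor
    · rintro ⟨h1, h2, h3⟩
      refine ⟨R, h1, rfl, ?_, h2⟩
      intro x hxS
      exact Finset.mem_compl.mpr fun hxR => (Finset.disjoint_left.mp h3) hxR hxS
    · rintro ⟨R', h1, rfl, h2, h3⟩
      exact ⟨h1, h3, Finset.disjoint_left.mpr fun x hx hxS =>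
        (Finset.mem_compl.mp (h2 hxS)) hx⟩
  rw [key, Finset.card_biUnion]
  · rw [Finset.sum_congr rfl (g := fun R => (n - m).choose l)]
    · rw [Finset.sum_const, Finset.card_powersetCard, card_univ, Fintype.card_fin,
        smul_eq_mul]
    · intro R hR
      rw [Finset.card_product, Finset.card_singleton, one_mul, Finset.card_powersetCard,
        Finset.card_compl, Fintype.card_fin, (Finset.mem_powersetCard.mp hR).2]
  · intro R hR R' hR' hne
    apply Finset.disjoint_left.mpr
    rintro ⟨S, T⟩ h1 h2
    simp only [Finset.mem_product, Finset.mem_singleton] at h1 h2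
    exact hne (h1.1.symm.trans h2.1)

lemma choose_split (a k m : ℕ) (hm : m ≤ k) :
    a.choose m * (a - m).choose (k - m) = a.choose k * k.choose m := by
  rcases le_or_gt k a with h | h
  · exact (Nat.choose_mul (n := a) hm).symm
  · rw [Nat.choose_eq_zero_of_lt h, zero_mul]
    rcases le_or_gt m a with h2 | h2
    · rw [Nat.choose_eq_zero_of_lt (by omega : a - m < k - m), mul_zero]
    · rw [Nat.choose_eq_zero_of_lt h2, zero_mul]

lemma sum_choose_sq (k : ℕ) :
    ∑ m ∈ Finset.range (k + 1), k.choose m * k.choose m = (2 * k).choose k := by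
  rw [two_mul, Nat.add_choose_eq, Finset.Nat.sum_antidiagonal_eq_sum_range_succ_mk]
  refine Finset.sum_congr rfl fun m hm => ?_
  have hm' : m ≤ k := Nat.lt_succ_iff.mp (Finset.mem_range.mp hm)
  simp only []
  rw [Nat.choose_symm hm']

lemma final_arith (a b k : ℕ) :
    ∑ m ∈ Finset.range (k + 1),
      (a.choose m * (a - m).choose (k - m)) * (b.choose m * (b - m).choose (k - m))
      = (2 * k).choose k * a.choose k * b.choose k := by
  rw [← sum_choose_sq k, Finset.sum_mul, Finset.sum_mul]
  refine Finset.sum_congr rfl fun m hm => ?_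
  have hm' : m ≤ k := Nat.lt_succ_iff.mp (Finset.mem_range.mp hm)
  rw [choose_split a k m hm', choose_split b k m hm']
  ring

/-- Vertices of the complex `Δ`: `Sum.inl (i,j)` is `x_{i,j}`, `Sum.inr (i,j)` is `y_{i,j}`. -/
abbrev DeltaVertex (a b : ℕ) := (Fin a × Fin b) ⊕ (Fin a × Fin b)

/-- `F` is a face of `Δ`: it contains none of the minimal non-faces
`{x_{i,j}, x_{i',j'}}` with `i ≤ i'`, `j ≥ j'`; `{y_{i,j}, y_{i',j'}}` with `i ≤ i'`, `j ≥ j'`;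
`{x_{i,j}, y_{i',j}}`; `{x_{i,j}, y_{i,j'}}`. -/
def IsFaceDelta {a b : ℕ} (F : Finset (DeltaVertex a b)) : Prop :=
  (∀ p q : Fin a × Fin b, Sum.inl p ∈ F → Sum.inl q ∈ F → p ≠ q →
      ¬(p.1 ≤ q.1 ∧ q.2 ≤ p.2)) ∧
  (∀ p q : Fin a × Fin b, Sum.inr p ∈ F → Sum.inr q ∈ F → p ≠ q →
      ¬(p.1 ≤ q.1 ∧ q.2 ≤ p.2)) ∧
  (∀ p q : Fin a × Fin b, Sum.inl p ∈ F → Sum.inr q ∈ F → p.1 ≠ q.1 ∧ p.2 ≠ q.2)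

section Faces
variable {a b : ℕ}

/-- The `x`-part of a face. -/
noncomputable def Xpart (F : Finset (DeltaVertex a b)) : Finset (Fin a × Fin b) :=
  F.preimage Sum.inl Sum.inl_injective.injOn

/-- The `y`-part of a face. -/
noncomputable def Ypart (F : Finset (DeltaVertex a b)) : Finset (Fin a × Fin b) :=
  F.preimage Sum.inr Sum.inr_injective.injOn

@[simp] lemma mem_Xpart {F : Finset (DeltaVertex a b)} {p : Fin a × Fin b} :
    p ∈ Xpart F ↔ Sum.inl p ∈ F := Finset.mem_preimage

@[simp] lemma mem_Ypart {F : Finset (DeltaVertex a b)} {p : Fin a × Fin b} :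
    p ∈ Ypart F ↔ Sum.inr p ∈ F := Finset.mem_preimage

lemma face_decomp (F : Finset (DeltaVertex a b)) :
    F = (Xpart F).image Sum.inl ∪ (Ypart F).image Sum.inr := by
  ext v
  cases v with
  | inl p => simp [Xpart, Ypart]
  | inr p => simp [Xpart, Ypart]

lemma face_card (F : Finset (DeltaVertex a b)) :
    F.card = (Xpart F).card + (Ypart F).card := by
  conv_lhs => rw [face_decomp F]
  rw [Finset.card_union_of_disjoint, Finset.card_image_of_injective _ Sum.inl_injective,
    Finset.card_image_of_injective _ Sum.inr_injective]
  apply Finset.disjoint_left.mpr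
  rintro v hv hv'
  obtain ⟨p, -, rfl⟩ := Finset.mem_image.mp hv
  obtain ⟨q, -, h⟩ := Finset.mem_image.mp hv'
  exact Sum.inl_ne_inr h.symm

lemma IsFaceDelta.chainyX {F : Finset (DeltaVertex a b)} (h : IsFaceDelta F) :
    Chainy (Xpart F) := fun p hp q hq => h.1 p q (mem_Xpart.mp hp) (mem_Xpart.mp hq)

lemma IsFaceDelta.chainyY {F : Finset (DeltaVertex a b)} (h : IsFaceDelta F) :
    Chainy (Ypart F) := fun p hp q hq => h.2.1 p q (mem_Ypart.mp hp) (mem_Ypart.mp hq)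

end Faces

theorem stmt_11 (a b : ℕ) (ha : 1 ≤ a) (hb : 1 ≤ b) (k : ℕ) :
    {F : Finset (DeltaVertex a b) | IsFaceDelta F ∧ F.card = k}.ncard
      = (2 * k).choose k * a.choose k * b.choose k := by
  classical
  have hset : {F : Finset (DeltaVertex a b) | IsFaceDelta F ∧ F.card = k}.ncard
      = ((univ : Finset (Finset (DeltaVertex a b))).filter
          fun F => IsFaceDelta F ∧ F.card = k).card := by
    rw [← Set.ncard_coe_finset]
    congr 1
    ext F
    simp
  rw [hset]
  set S := (univ : Finset (Finset (DeltaVertex a b))).filter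
      fun F => IsFaceDelta F ∧ F.card = k with hS
  have hfib : ∀ F ∈ S, (Xpart F).card ∈ Finset.range (k + 1) := by
    intro F hF
    obtain ⟨-, -, hcard⟩ := Finset.mem_filter.mp hF
    rw [Finset.mem_range, Nat.lt_succ_iff, ← hcard, face_card F]
    exact Nat.le_add_right _ _
  rw [Finset.card_eq_sum_card_fiberwise hfib]
  have hfibcard : ∀ m ∈ Finset.range (k + 1),
      (S.filter fun F => (Xpart F).card = m).card
        = (a.choose m * (a - m).choose (k - m)) * (b.choose m * (b - m).choose (k - m)) := by
    intro m hm
    have hmk : m ≤ k := Nat.lt_succ_iff.mp (Finset.mem_range.mp hm)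
    rw [← card_disjPairs a m (k - m), ← card_disjPairs b m (k - m), ← Finset.card_product]
    apply Finset.card_bij
      (i := fun F _ => (((Xpart F).image Prod.fst, (Ypart F).image Prod.fst),
                        ((Xpart F).image Prod.snd, (Ypart F).image Prod.snd)))
    -- maps to
    · intro F hF
      rw [Finset.mem_filter, hS, Finset.mem_filter] at hF
      obtain ⟨⟨-, hface, hcard⟩, hXm⟩ := hF
      have hYm : (Ypart F).card = k - m := by
        have := face_card F
        omega
      simp only [Finset.mem_product, disjPairs, Finset.mem_filter, Finset.mem_product,
        Finset.mem_univ, true_and]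
      refine ⟨⟨?_, ?_, ?_⟩, ?_, ?_, ?_⟩
      · rw [hface.chainyX.card_image_fst, hXm]
      · rw [hface.chainyY.card_image_fst, hYm]
      · apply Finset.disjoint_left.mpr
        rintro r hr hr'
        obtain ⟨p, hp, rfl⟩ := Finset.mem_image.mp hr
        obtain ⟨q, hq, hpq⟩ := Finset.mem_image.mp hr'
        exact (hface.2.2 p q (mem_Xpart.mp hp) (mem_Ypart.mp hq)).1 hpq.symm
      · rw [hface.chainyX.card_image_snd, hXm]
      · rw [hface.chainyY.card_image_snd, hYm]
      · apply Finset.disjoint_left.mpr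
        rintro r hr hr'
        obtain ⟨p, hp, rfl⟩ := Finset.mem_image.mp hr
        obtain ⟨q, hq, hpq⟩ := Finset.mem_image.mp hr'
        exact (hface.2.2 p q (mem_Xpart.mp hp) (mem_Ypart.mp hq)).2 hpq.symm
    -- injective
    · intro F hF F' hF' heq
      rw [Finset.mem_filter, hS, Finset.mem_filter] at hF hF'
      obtain ⟨⟨-, hface, -⟩, -⟩ := hF
      obtain ⟨⟨-, hface', -⟩, -⟩ := hF'
      simp only [Prod.mk.injEq] at heq
      obtain ⟨⟨e1, e2⟩, e3, e4⟩ := heq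
      have hXeq : Xpart F = Xpart F' := hface.chainyX.ext hface'.chainyX e1 e3
      have hYeq : Ypart F = Ypart F' := hface.chainyY.ext hface'.chainyY e2 e4
      rw [face_decomp F, face_decomp F', hXeq, hYeq]
    -- surjective
    · rintro ⟨⟨R1, R2⟩, C1, C2⟩ hmem
      simp only [Finset.mem_product, disjPairs, Finset.mem_filter, Finset.mem_product,
        Finset.mem_univ, true_and] at hmem
      obtain ⟨⟨hR1, hR2, hRdisj⟩, hC1, hC2, hCdisj⟩ := hmem
      have h1 : C1.card = R1.card := by rw [hR1, hC1]
      have h2 : C2.card = R2.card := by rw [hR2, hC2]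
      set X := chainOf R1 C1 h1 with hX
      set Y := chainOf R2 C2 h2 with hY
      set F : Finset (DeltaVertex a b) := X.image Sum.inl ∪ Y.image Sum.inr with hF
      have hXpart : Xpart F = X := by
        ext p
        simp [hF, Xpart, Finset.mem_preimage]
      have hYpart : Ypart F = Y := by
        ext p
        simp [hF, Ypart, Finset.mem_preimage]
      have hXR : X.image Prod.fst = R1 := chainOf_image_fst R1 C1 h1
      have hXC : X.image Prod.snd = C1 := chainOf_image_snd R1 C1 h1
      have hYR : Y.image Prod.fst = R2 := chainOf_image_fst R2 C2 h2
      have hYC : Y.image Prod.snd = C2 := chainOf_image_snd R2 C2 h2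
      have hface : IsFaceDelta F := by
        refine ⟨?_, ?_, ?_⟩
        · intro p q hp hq
          have hp' : p ∈ X := by rw [← hXpart]; exact mem_Xpart.mpr hp
          have hq' : q ∈ X := by rw [← hXpart]; exact mem_Xpart.mpr hq
          exact chainOf_chainy R1 C1 h1 p hp' q hq'
        · intro p q hp hq
          have hp' : p ∈ Y := by rw [← hYpart]; exact mem_Ypart.mpr hp
          have hq' : q ∈ Y := by rw [← hYpart]; exact mem_Ypart.mpr hq
          exact chainOf_chainy R2 C2 h2 p hp' q hq'
        · intro p q hp hq
          have hp' : p ∈ X := by rw [← hXpart]; exact mem_Xpart.mpr hp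
          have hq' : q ∈ Y := by rw [← hYpart]; exact mem_Ypart.mpr hq
          constructor
          · intro e
            have h1' : p.1 ∈ R1 := hXR ▸ Finset.mem_image_of_mem _ hp'
            have h2' : q.1 ∈ R2 := hYR ▸ Finset.mem_image_of_mem _ hq'
            exact Finset.disjoint_left.mp hRdisj h1' (e ▸ h2')
          · intro e
            have h1' : p.2 ∈ C1 := hXC ▸ Finset.mem_image_of_mem _ hp'
            have h2' : q.2 ∈ C2 := hYC ▸ Finset.mem_image_of_mem _ hq'
            exact Finset.disjoint_left.mp hCdisj h1' (e ▸ h2')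
      have hcard : F.card = k := by
        rw [face_card F, hXpart, hYpart, chainOf_card, chainOf_card, hR1, hR2]
        omega
      refine ⟨F, ?_, ?_⟩
      · rw [Finset.mem_filter, hS, Finset.mem_filter]
        exact ⟨⟨Finset.mem_univ _, hface, hcard⟩, by rw [hXpart, chainOf_card, hR1]⟩
      · rw [hXpart, hYpart, hXR, hXC, hYR, hYC]
  rw [Finset.sum_congr rfl hfibcard]
  exact final_arith a b k
end

section
/- For all natural numbers a, b, the number of planar spanning trees of the complete bipartite graph K_{a+1,b+1} (drawn with the a+1 upper vertices on one horizontal line in order and the b+1 lower vertices on a parallel line in order, edges drawn as straight segments) equals C(a+b, a). -/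
open Finset

/-- The graph on the vertices of `K_{a+1,b+1}` (`Sum.inl i` are the upper vertices `v_i`,
`Sum.inr j` the lower vertices `w_j`) whose edges are the pairs in `T`. -/
def treeGraph (a b : ℕ) (T : Finset (Fin (a + 1) × Fin (b + 1))) :
    SimpleGraph (Fin (a + 1) ⊕ Fin (b + 1)) :=
  SimpleGraph.fromRel (fun u v => ∃ p ∈ T, u = Sum.inl p.1 ∧ v = Sum.inr p.2)

namespace Stmt14Aux

/-- The "staircase profile" of a monotone sequence `c`, extended by `0` at the left
and `b` at the right. -/
def stair (a b : ℕ) (c : Fin a → Fin (b + 1)) (k : ℕ) : ℕ :=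
  if h0 : k = 0 then 0 else if h : k ≤ a then (c ⟨k - 1, by omega⟩ : ℕ) else b

lemma stair_le_b (a b : ℕ) (c : Fin a → Fin (b + 1)) (k : ℕ) : stair a b c k ≤ b := by
  unfold stair
  split_ifs with h1 h2
  · omega
  · exact Nat.lt_succ_iff.mp (c _).2
  · exact le_refl _

lemma stair_zero (a b : ℕ) (c : Fin a → Fin (b + 1)) : stair a b c 0 = 0 := by simp [stair]

lemma stair_last (a b : ℕ) (c : Fin a → Fin (b + 1)) : stair a b c (a + 1) = b := by
  unfold stair
  rw [dif_neg (by omega), dif_neg (by omega)]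

lemma stair_mono {a b : ℕ} {c : Fin a → Fin (b + 1)} (hc : Monotone c) :
    Monotone (stair a b c) := by
  intro k k' hkk'
  unfold stair
  split_ifs <;>
    first
      | omega
      | exact Nat.lt_succ_iff.mp (c _).2
      | exact le_refl _
      | exact hc (Fin.mk_le_mk.mpr (by omega))
      | exact Fin.le_def.mp (hc (Fin.mk_le_mk.mpr (by omega)))

/-- The planar tree determined by the monotone sequence `c`. -/
def F (a b : ℕ) (c : Fin a → Fin (b + 1)) : Finset (Fin (a + 1) × Fin (b + 1)) :=
  Finset.univ.filter fun p => stair a b c p.1.1 ≤ p.2.1 ∧ p.2.1 ≤ stair a b c (p.1.1 + 1)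

lemma mem_F {a b : ℕ} {c : Fin a → Fin (b + 1)} {p : Fin (a + 1) × Fin (b + 1)} :
    p ∈ F a b c ↔ stair a b c p.1.1 ≤ p.2.1 ∧ p.2.1 ≤ stair a b c (p.1.1 + 1) := by
  simp [F]

lemma card_F {a b : ℕ} {c : Fin a → Fin (b + 1)} (hc : Monotone c) :
    (F a b c).card = a + b + 1 := by
  have hIcc : ∀ i : Fin (a + 1),
      (Finset.univ.filter fun j : Fin (b + 1) =>
          stair a b c i.1 ≤ j.1 ∧ j.1 ≤ stair a b c (i.1 + 1)).card
        = stair a b c (i.1 + 1) + 1 - stair a b c i.1 := by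
    intro i
    have h1 : stair a b c i.1 < b + 1 := Nat.lt_succ_of_le (stair_le_b a b c _)
    have h2 : stair a b c (i.1 + 1) < b + 1 := Nat.lt_succ_of_le (stair_le_b a b c _)
    have : (Finset.univ.filter fun j : Fin (b + 1) =>
        stair a b c i.1 ≤ j.1 ∧ j.1 ≤ stair a b c (i.1 + 1))
        = Finset.Icc ⟨stair a b c i.1, h1⟩ ⟨stair a b c (i.1 + 1), h2⟩ := by
      ext j
      simp [Finset.mem_Icc, Fin.le_def]
    rw [this, Fin.card_Icc]
  have hsplit : (F a b c).card =
      ∑ i : Fin (a + 1), (stair a b c (i.1 + 1) + 1 - stair a b c i.1) := by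
    rw [F, Finset.card_filter]
    rw [Fintype.sum_prod_type]
    refine Finset.sum_congr rfl fun i _ => ?_
    rw [← hIcc i, Finset.card_filter]
  rw [hsplit]
  have hterm : ∀ i : Fin (a + 1),
      stair a b c (i.1 + 1) + 1 - stair a b c i.1
        = (stair a b c (i.1 + 1) - stair a b c i.1) + 1 := by
    intro i
    have := stair_mono hc (Nat.le_add_right i.1 1)
    omega
  calc ∑ i : Fin (a + 1), (stair a b c (i.1 + 1) + 1 - stair a b c i.1)
      = ∑ i ∈ Finset.range (a + 1), (stair a b c (i + 1) + 1 - stair a b c i) := by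
        rw [Fin.sum_univ_eq_sum_range (fun i => stair a b c (i + 1) + 1 - stair a b c i)]
    _ = ∑ i ∈ Finset.range (a + 1), ((stair a b c (i + 1) - stair a b c i) + 1) := by
        refine Finset.sum_congr rfl fun i _ => ?_
        have := stair_mono hc (Nat.le_add_right i 1)
        omega
    _ = (∑ i ∈ Finset.range (a + 1), (stair a b c (i + 1) - stair a b c i)) + (a + 1) := by
        rw [Finset.sum_add_distrib]; simp
    _ = (stair a b c (a + 1) - stair a b c 0) + (a + 1) := by
        rw [Finset.sum_range_tsub (stair_mono hc)]
    _ = a + b + 1 := by rw [stair_last, stair_zero]; omega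

section Graph

variable {a b : ℕ}

lemma adj_iff {T : Finset (Fin (a + 1) × Fin (b + 1))} {i : Fin (a + 1)} {j : Fin (b + 1)} :
    (treeGraph a b T).Adj (Sum.inl i) (Sum.inr j) ↔ (i, j) ∈ T := by
  constructor
  · rintro ⟨hne, ⟨p, hp, h1, h2⟩ | ⟨p, hp, h1, h2⟩⟩
    · cases h1
      cases h2
      simpa using hp
    · cases h1
  · intro h
    exact ⟨by simp, Or.inl ⟨(i, j), h, rfl, rfl⟩⟩

lemma adj_inl {T : Finset (Fin (a + 1) × Fin (b + 1))} {i : Fin (a + 1)}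
    {v : Fin (a + 1) ⊕ Fin (b + 1)} (h : (treeGraph a b T).Adj (Sum.inl i) v) :
    ∃ j, v = Sum.inr j ∧ (i, j) ∈ T := by
  obtain ⟨hne, ⟨p, hp, h1, h2⟩ | ⟨p, hp, h1, h2⟩⟩ := h
  · cases h1
    exact ⟨p.2, h2, by simpa using hp⟩
  · cases h2

lemma adj_inr {T : Finset (Fin (a + 1) × Fin (b + 1))} {j : Fin (b + 1)}
    {v : Fin (a + 1) ⊕ Fin (b + 1)} (h : (treeGraph a b T).Adj (Sum.inr j) v) :
    ∃ i, v = Sum.inl i ∧ (i, j) ∈ T := by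
  obtain ⟨hne, ⟨p, hp, h1, h2⟩ | ⟨p, hp, h1, h2⟩⟩ := h
  · cases h1
  · cases h1
    cases h2
    exact ⟨p.1, rfl, by simpa using hp⟩

lemma reach_invar {V : Type*} {G : SimpleGraph V} (g : V → Prop)
    (h : ∀ u v, G.Adj u v → (g u ↔ g v)) {u v : V} (hr : G.Reachable u v) :
    g u ↔ g v := by
  obtain ⟨w⟩ := hr
  induction w with
  | nil => exact Iff.rfl
  | cons ha _ ih => exact (h _ _ ha).trans ih

lemma conn_F {c : Fin a → Fin (b + 1)} (hc : Monotone c) :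
    (treeGraph a b (F a b c)).Connected := by
  have hmem : ∀ (i : ℕ) (hi : i ≤ a) (j : ℕ) (hj : j ≤ b),
      stair a b c i ≤ j → j ≤ stair a b c (i + 1) →
      ((⟨i, by omega⟩ : Fin (a + 1)), (⟨j, by omega⟩ : Fin (b + 1))) ∈ F a b c := by
    intro i hi j hj h1 h2
    rw [mem_F]
    exact ⟨h1, h2⟩
  have hadj : ∀ (i : ℕ) (hi : i ≤ a) (j : ℕ) (hj : j ≤ b),
      stair a b c i ≤ j → j ≤ stair a b c (i + 1) →
      (treeGraph a b (F a b c)).Adj (Sum.inl ⟨i, by omega⟩) (Sum.inr ⟨j, by omega⟩) :=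
    fun i hi j hj h1 h2 => adj_iff.mpr (hmem i hi j hj h1 h2)
  have reach_inl : ∀ (i : ℕ) (hi : i ≤ a),
      (treeGraph a b (F a b c)).Reachable (Sum.inl ⟨0, by omega⟩) (Sum.inl ⟨i, by omega⟩) := by
    intro i
    induction i with
    | zero => intro _; exact SimpleGraph.Reachable.refl _
    | succ n ih =>
      intro hi
      have hn : n ≤ a := by omega
      have h1 : (treeGraph a b (F a b c)).Adj (Sum.inl ⟨n, by omega⟩)
          (Sum.inr ⟨stair a b c (n + 1), by have := stair_le_b a b c (n+1); omega⟩) :=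
        hadj n hn (stair a b c (n + 1)) (stair_le_b a b c (n + 1))
          (stair_mono hc (Nat.le_add_right n 1)) (le_refl _)
      have h2 : (treeGraph a b (F a b c)).Adj (Sum.inl ⟨n + 1, by omega⟩)
          (Sum.inr ⟨stair a b c (n + 1), by have := stair_le_b a b c (n+1); omega⟩) :=
        hadj (n + 1) hi (stair a b c (n + 1)) (stair_le_b a b c (n + 1))
          (le_refl _) (stair_mono hc (Nat.le_add_right (n+1) 1))
      exact ((ih hn).trans h1.reachable).trans h2.symm.reachable
  have reach : ∀ v, (treeGraph a b (F a b c)).Reachable (Sum.inl ⟨0, by omega⟩) v := by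
    intro v
    match v with
    | Sum.inl i =>
      have := reach_inl i.1 (by omega)
      simpa using this
    | Sum.inr j =>
      set P : ℕ → Prop := fun n => stair a b c n ≤ j.1 with hP
      have hP0 : P 0 := by simp [hP, stair_zero]
      set i := Nat.findGreatest P a with hidef
      have hia : i ≤ a := Nat.findGreatest_le (P := P) a
      have hspec : P i := Nat.findGreatest_spec (Nat.zero_le a) hP0
      have hupper : j.1 ≤ stair a b c (i + 1) := by
        rcases Nat.lt_or_ge i a with hlt | hge
        · by_contra hcon
          have : ¬ P (i + 1) := Nat.findGreatest_is_greatest (k := i + 1) (n := a) (by omega) (by omega)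
          simp only [hP] at this
          omega
        · have : i = a := by omega
          rw [this, stair_last]
          omega
      have hadj' := hadj i hia j.1 (Nat.lt_succ_iff.mp j.2) hspec hupper
      have hje : (Sum.inr (⟨(j : ℕ), Nat.lt_succ_of_le (Nat.lt_succ_iff.mp j.2)⟩ : Fin (b + 1))
          : Fin (a + 1) ⊕ Fin (b + 1)) = Sum.inr j := rfl
      rw [hje] at hadj'
      exact ((reach_inl i hia).trans hadj'.reachable)
  constructor
  intro u v
  exact (reach u).symm.trans (reach v)

end Graph

end Stmt14Aux

namespace Stmt14Aux

section Converse

variable {a b : ℕ} {T : Finset (Fin (a + 1) × Fin (b + 1))}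

lemma exists_edge_left (hconn : (treeGraph a b T).Connected) (i : Fin (a + 1)) :
    ∃ j, (i, j) ∈ T := by
  obtain ⟨w⟩ := hconn.preconnected (Sum.inl i) (Sum.inr (0 : Fin (b + 1)))
  cases w with
  | cons ha p =>
    obtain ⟨j, _, hj⟩ := adj_inl ha
    exact ⟨j, hj⟩

lemma exists_edge_right (hconn : (treeGraph a b T).Connected) (j : Fin (b + 1)) :
    ∃ i, (i, j) ∈ T := by
  obtain ⟨w⟩ := hconn.preconnected (Sum.inr j) (Sum.inl (0 : Fin (a + 1)))
  cases w with
  | cons ha p =>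
    obtain ⟨i, _, hi⟩ := adj_inr ha
    exact ⟨i, hi⟩

def colS (T : Finset (Fin (a + 1) × Fin (b + 1))) (i : Fin (a + 1)) : Finset (Fin (b + 1)) :=
  (T.filter fun p => p.1 = i).image Prod.snd

lemma mem_colS {i : Fin (a + 1)} {j : Fin (b + 1)} : j ∈ colS T i ↔ (i, j) ∈ T := by
  constructor
  · intro h
    obtain ⟨p, hp, h2⟩ := Finset.mem_image.mp h
    obtain ⟨hpT, h1⟩ := Finset.mem_filter.mp hp
    have : p = (i, j) := Prod.ext_iff.mpr ⟨h1, h2⟩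
    rwa [this] at hpT
  · intro h
    exact Finset.mem_image.mpr ⟨(i, j), Finset.mem_filter.mpr ⟨h, rfl⟩, rfl⟩

lemma colS_nonempty (hconn : (treeGraph a b T).Connected) (i : Fin (a + 1)) :
    (colS T i).Nonempty := by
  obtain ⟨j, hj⟩ := exists_edge_left hconn i
  exact ⟨j, mem_colS.mpr hj⟩

lemma eq_F_of (hconn : (treeGraph a b T).Connected)
    (hord : ∀ p ∈ T, ∀ q ∈ T, p.1 < q.1 → p.2 ≤ q.2) :
    ∃ c : Fin a → Fin (b + 1), Monotone c ∧ T = F a b c := by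
  have hne : ∀ i, (colS T i).Nonempty := colS_nonempty hconn
  set m : Fin (a + 1) → Fin (b + 1) := fun i => (colS T i).min' (hne i) with hm
  set M : Fin (a + 1) → Fin (b + 1) := fun i => (colS T i).max' (hne i) with hM
  have hmmem : ∀ i, (i, m i) ∈ T := fun i => mem_colS.mp ((colS T i).min'_mem (hne i))
  have hMmem : ∀ i, (i, M i) ∈ T := fun i => mem_colS.mp ((colS T i).max'_mem (hne i))
  have hmle : ∀ i j, (i, j) ∈ T → m i ≤ j := fun i j h => Finset.min'_le _ _ (mem_colS.mpr h)
  have hleM : ∀ i j, (i, j) ∈ T → j ≤ M i := fun i j h => Finset.le_max' _ _ (mem_colS.mpr h)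
  have hmM : ∀ i, m i ≤ M i := fun i => hmle i (M i) (hMmem i)
  have hcross : ∀ i i' : Fin (a + 1), i < i' → M i ≤ m i' :=
    fun i i' h => hord (i, M i) (hMmem i) (i', m i') (hmmem i') h
  have hgap : ∀ (i : Fin (a + 1)) (j : Fin (b + 1)), m i ≤ j → j ≤ M i → (i, j) ∈ T := by
    intro i j h1 h2
    by_contra hj
    obtain ⟨i', hi'⟩ := exists_edge_right hconn j
    rcases lt_trichotomy i' i with hlt | heq | hgt
    · have h3 := hord (i', j) hi' (i, m i) (hmmem i) hlt
      have h4 : j = m i := le_antisymm h3 h1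
      exact hj (h4.symm ▸ hmmem i)
    · exact hj (heq ▸ hi')
    · have h3 := hord (i, M i) (hMmem i) (i', j) hi' hgt
      have h4 : j = M i := le_antisymm h2 h3
      exact hj (h4.symm ▸ hMmem i)
  have hlink : ∀ (i : Fin (a + 1)) (_ : i.1 < a), M i = m ⟨i.1 + 1, by omega⟩ := by
    intro i hia
    set i' : Fin (a + 1) := ⟨i.1 + 1, by omega⟩ with hi'
    have hle : M i ≤ m i' := hcross i i' (by simp [Fin.lt_def, hi'])
    refine le_antisymm hle ?_
    by_contra hcon
    have hlt : M i < m i' := lt_of_not_ge hcon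
    set g : Fin (a + 1) ⊕ Fin (b + 1) → Prop := fun v =>
      match v with
      | Sum.inl x => x.1 ≤ i.1
      | Sum.inr y => y ≤ M i
      with hg
    have key : ∀ (x : Fin (a + 1)) (y : Fin (b + 1)), (x, y) ∈ T → (x.1 ≤ i.1 ↔ y ≤ M i) := by
      intro x y hxy
      constructor
      · intro hx
        rcases eq_or_lt_of_le (show x ≤ i from hx) with heq | hlt'
        · exact heq ▸ hleM x y hxy
        · exact le_trans (hord (x, y) hxy (i, m i) (hmmem i) hlt') (hmM i)
      · intro hy
        by_contra hx
        have hx' : i.1 + 1 ≤ x.1 := by omega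
        have hmy : m i' ≤ y := by
          rcases eq_or_lt_of_le (show i' ≤ x from hx') with heq | hlt'
          · rw [heq]; exact hmle x y hxy
          · exact hord (i', m i') (hmmem i') (x, y) hxy hlt'
        exact absurd (le_trans hmy hy) (not_le.mpr hlt)
    have hinv : ∀ u v, (treeGraph a b T).Adj u v → (g u ↔ g v) := by
      intro u v huv
      match u with
      | Sum.inl x =>
        obtain ⟨y, rfl, hxy⟩ := adj_inl huv
        exact key x y hxy
      | Sum.inr y =>
        obtain ⟨x, rfl, hxy⟩ := adj_inr huv
        exact (key x y hxy).symm
    have hreach := reach_invar g hinv (hconn.preconnected (Sum.inl i) (Sum.inl i'))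
    have h1 : g (Sum.inl i) := by simp [hg]
    have h2 : g (Sum.inl i') := hreach.mp h1
    simp only [hg, hi'] at h2
    omega
  have hlink' : ∀ (x : ℕ) (hx : x < a), M ⟨x, by omega⟩ = m ⟨x + 1, by omega⟩ :=
    fun x hx => hlink ⟨x, by omega⟩ hx
  have hm0 : m ⟨0, by omega⟩ = 0 := by
    refine le_antisymm ?_ (Fin.zero_le _)
    obtain ⟨i', hi'⟩ := exists_edge_right hconn 0
    rcases Nat.eq_zero_or_pos i'.1 with h0 | hpos
    · have hh : i' = ⟨0, by omega⟩ := Fin.ext h0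
      rw [← hh]
      exact hmle _ _ hi'
    · exact hord (⟨0, by omega⟩, m ⟨0, by omega⟩) (hmmem _) (i', 0) hi'
        (by show (0 : ℕ) < i'.1; omega)
  have hMa : M ⟨a, by omega⟩ = Fin.last b := by
    refine le_antisymm (Fin.le_last _) ?_
    obtain ⟨i', hi'⟩ := exists_edge_right hconn (Fin.last b)
    rcases Nat.lt_or_ge i'.1 a with hlt | hge
    · exact hord (i', Fin.last b) hi' (⟨a, by omega⟩, M ⟨a, by omega⟩) (hMmem _)
        (by show i'.1 < a; omega)
    · have hh : i' = ⟨a, by omega⟩ := Fin.ext (by show i'.1 = a; have := i'.2; omega)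
      rw [← hh]
      exact hleM _ _ hi'
  refine ⟨fun k => M ⟨k.1, by omega⟩, ?_, ?_⟩
  · intro k k' hkk'
    rcases eq_or_lt_of_le hkk' with heq | hlt
    · rw [heq]
    · exact le_trans (hcross ⟨k.1, by omega⟩ ⟨k'.1, by omega⟩
        (by show k.1 < k'.1; exact hlt)) (hmM _)
  · have hstair_lo : ∀ i : Fin (a + 1),
        stair a b (fun k => M ⟨k.1, by omega⟩) i.1 = (m i).1 := by
      intro i
      rcases Nat.eq_zero_or_pos i.1 with h0 | hpos
      · have hh : i = ⟨0, by omega⟩ := Fin.ext h0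
        rw [hh, hm0]
        unfold stair
        rw [dif_pos rfl]
        rfl
      · unfold stair
        rw [dif_neg (by omega), dif_pos (show i.1 ≤ a by omega)]
        have hl : M ⟨i.1 - 1, by omega⟩ = m i := by
          have h1 := hlink' (i.1 - 1) (by omega)
          have hh : (⟨i.1 - 1 + 1, by omega⟩ : Fin (a + 1)) = i :=
            Fin.ext (by show i.1 - 1 + 1 = i.1; omega)
          rwa [hh] at h1
        show ((M ⟨i.1 - 1, by omega⟩ : Fin (b + 1)) : ℕ) = (m i).1
        rw [hl]
    have hstair_hi : ∀ i : Fin (a + 1),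
        stair a b (fun k => M ⟨k.1, by omega⟩) (i.1 + 1) = (M i).1 := by
      intro i
      rcases Nat.lt_or_ge i.1 a with hlt | hge
      · unfold stair
        rw [dif_neg (by omega), dif_pos (show i.1 + 1 ≤ a by omega)]
        simp only [Nat.add_sub_cancel]
      · have hia : i = ⟨a, by omega⟩ := Fin.ext (by show i.1 = a; have := i.2; omega)
        unfold stair
        rw [dif_neg (by omega), dif_neg (by omega), hia, hMa]
        rfl
    ext p
    rw [mem_F, hstair_lo p.1, hstair_hi p.1]
    constructor
    · intro hp
      have hp' : (p.1, p.2) ∈ T := by simpa using hp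
      exact ⟨hmle p.1 p.2 hp', hleM p.1 p.2 hp'⟩
    · rintro ⟨h1, h2⟩
      have := hgap p.1 p.2 h1 h2
      simpa using this

end Converse

section Inj

lemma stair_succ_eq {a b : ℕ} (d : Fin a → Fin (b + 1)) (k : Fin a) :
    stair a b d (k.1 + 1) = (d k).1 := by
  unfold stair
  rw [dif_neg (by omega), dif_pos (show k.1 + 1 ≤ a by omega)]
  simp only [Nat.add_sub_cancel]

lemma F_le {a b : ℕ} {c c' : Fin a → Fin (b + 1)} (hc : Monotone c)
    (h : F a b c = F a b c') (k : Fin a) : (c k).1 ≤ (c' k).1 := by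
  have hs := stair_succ_eq c k
  have hs' := stair_succ_eq c' k
  have hmem : ((⟨k.1, by omega⟩ : Fin (a + 1)), c k) ∈ F a b c := by
    rw [mem_F]
    refine ⟨?_, ?_⟩
    · have h2 := stair_mono hc (Nat.le_add_right k.1 1)
      simp only
      omega
    · simp only
      omega
  rw [h, mem_F] at hmem
  have h2 := hmem.2
  simp only at h2
  omega

lemma F_inj {a b : ℕ} {c c' : Fin a → Fin (b + 1)} (hc : Monotone c) (hc' : Monotone c')
    (h : F a b c = F a b c') : c = c' := by
  funext k
  exact Fin.ext (le_antisymm (F_le hc h k) (F_le hc' h.symm k))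

end Inj

section Count

lemma smono_gap {n : ℕ} (v : Fin n → ℕ)
    (hv : ∀ k k' : Fin n, k.1 < k'.1 → v k < v k') :
    ∀ (d : ℕ) (k k' : Fin n), k.1 + d = k'.1 → v k + d ≤ v k' := by
  intro d
  induction d with
  | zero =>
    intro k k' h
    have hh : k = k' := Fin.ext (by omega)
    rw [hh]
    omega
  | succ nn ih =>
    intro k k' h
    have hk'' : k.1 + nn < n := by omega
    have h1 := ih k ⟨k.1 + nn, hk''⟩ rfl
    have h2 := hv ⟨k.1 + nn, hk''⟩ k' (by simp; omega)
    omega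

def dmap (a b : ℕ) (c : Fin a → Fin (b + 1)) (k : Fin a) : Fin (a + b) :=
  ⟨(c k).1 + k.1, by have h1 := (c k).2; have h2 := k.2; omega⟩

lemma dmap_smono {a b : ℕ} {c : Fin a → Fin (b + 1)} (hc : Monotone c) :
    StrictMono (dmap a b c) := by
  intro k k' h
  have h1 : (c k).1 ≤ (c k').1 := hc (le_of_lt h)
  have h2 : k.1 < k'.1 := h
  simp only [dmap, Fin.lt_def]
  omega

lemma card_dmap {a b : ℕ} {c : Fin a → Fin (b + 1)} (hc : Monotone c) :
    (Finset.univ.image (dmap a b c)).card = a := by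
  rw [Finset.card_image_of_injective _ (dmap_smono hc).injective, Finset.card_univ,
    Fintype.card_fin]

lemma count_mono (a b : ℕ) :
    Nat.card {c : Fin a → Fin (b + 1) // Monotone c} = (a + b).choose a := by
  have hbij : Function.Bijective (fun c : {c : Fin a → Fin (b + 1) // Monotone c} =>
      (⟨Finset.univ.image (dmap a b c.1), card_dmap c.2⟩ :
        {s : Finset (Fin (a + b)) // s.card = a})) := by
    constructor
    · intro c c' h
      have himg : Finset.univ.image (dmap a b c.1) = Finset.univ.image (dmap a b c'.1) :=
        congrArg Subtype.val h
      have h1 : dmap a b c.1 = (Finset.univ.image (dmap a b c.1)).orderEmbOfFin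
          (card_dmap c.2) :=
        Finset.orderEmbOfFin_unique _
          (fun x => Finset.mem_image_of_mem _ (Finset.mem_univ x)) (dmap_smono c.2)
      have h2 : dmap a b c'.1 = (Finset.univ.image (dmap a b c.1)).orderEmbOfFin
          (card_dmap c.2) :=
        Finset.orderEmbOfFin_unique _
          (fun x => himg ▸ Finset.mem_image_of_mem _ (Finset.mem_univ x)) (dmap_smono c'.2)
      have heq : dmap a b c.1 = dmap a b c'.1 := by rw [h1, h2]
      apply Subtype.ext
      funext k
      have hk := congrFun heq k
      have hk' : (c.1 k).1 + k.1 = (c'.1 k).1 + k.1 := congrArg Fin.val hk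
      exact Fin.ext (by omega)
    · rintro ⟨s, hs⟩
      set e := s.orderEmbOfFin hs with he
      have hesm : StrictMono e := (s.orderEmbOfFin hs).strictMono
      have hgap : ∀ (d : ℕ) (k k' : Fin a), k.1 + d = k'.1 → (e k).1 + d ≤ (e k').1 :=
        smono_gap (fun k => (e k).1) (fun k k' h => hesm (show k < k' from h))
      have hge : ∀ k : Fin a, k.1 ≤ (e k).1 := by
        intro k
        have h0 : (0 : ℕ) < a := lt_of_le_of_lt (Nat.zero_le _) k.2
        have := hgap k.1 ⟨0, h0⟩ k (by show 0 + k.1 = k.1; omega)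
        omega
      have hle : ∀ k : Fin a, (e k).1 ≤ b + k.1 := by
        intro k
        have hka : a - 1 < a := by have := k.2; omega
        have h1 := hgap (a - 1 - k.1) k ⟨a - 1, hka⟩
          (by show k.1 + (a - 1 - k.1) = a - 1; have := k.2; omega)
        have h2 : (e ⟨a - 1, hka⟩).1 < a + b := (e ⟨a - 1, hka⟩).2
        have := k.2
        omega
      have hcdef : ∀ k : Fin a, (e k).1 - k.1 < b + 1 := by
        intro k
        have := hle k
        omega
      set cf : Fin a → Fin (b + 1) := fun k => ⟨(e k).1 - k.1, hcdef k⟩ with hcf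
      have hmono : Monotone cf := by
        intro k k' hkk'
        have hkk'' : k.1 ≤ k'.1 := hkk'
        have h1 := hgap (k'.1 - k.1) k k' (by omega)
        have h2 := hge k
        show ((e k).1 - k.1) ≤ ((e k').1 - k'.1)
        omega
      refine ⟨⟨cf, hmono⟩, Subtype.ext ?_⟩
      show Finset.univ.image (dmap a b cf) = s
      apply Finset.eq_of_subset_of_card_le
      · intro x hx
        obtain ⟨k, _, rfl⟩ := Finset.mem_image.mp hx
        have hxk : dmap a b cf k = e k := by
          apply Fin.ext
          show ((e k).1 - k.1) + k.1 = (e k).1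
          have := hge k
          omega
        rw [hxk]
        exact Finset.orderEmbOfFin_mem s hs k
      · rw [hs, card_dmap hmono]
  rw [Nat.card_eq_fintype_card, Fintype.card_of_bijective hbij, Fintype.card_finset_len,
    Fintype.card_fin]

end Count

end Stmt14Aux

theorem stmt_14 (a b : ℕ) :
    {T : Finset (Fin (a + 1) × Fin (b + 1)) |
        (treeGraph a b T).Connected ∧ T.card = a + b + 1 ∧
          ∀ p ∈ T, ∀ q ∈ T, p.1 < q.1 → p.2 ≤ q.2}.ncard
      = (a + b).choose a := by
  classical
  have hset : {T : Finset (Fin (a + 1) × Fin (b + 1)) |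
        (treeGraph a b T).Connected ∧ T.card = a + b + 1 ∧
          ∀ p ∈ T, ∀ q ∈ T, p.1 < q.1 → p.2 ≤ q.2}
      = Set.range (fun c : {c : Fin a → Fin (b + 1) // Monotone c} => Stmt14Aux.F a b c.1) := by
    ext T
    simp only [Set.mem_setOf_eq, Set.mem_range]
    constructor
    · rintro ⟨hconn, _, hord⟩
      obtain ⟨c, hc, hTc⟩ := Stmt14Aux.eq_F_of hconn hord
      exact ⟨⟨c, hc⟩, hTc.symm⟩
    · rintro ⟨⟨c, hc⟩, rfl⟩
      refine ⟨Stmt14Aux.conn_F hc, Stmt14Aux.card_F hc, ?_⟩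
      intro p hp q hq hlt
      rw [Stmt14Aux.mem_F] at hp hq
      have hp2 : (p.2 : ℕ) ≤ Stmt14Aux.stair a b c (p.1.1 + 1) := hp.2
      have hq1 : Stmt14Aux.stair a b c q.1.1 ≤ (q.2 : ℕ) := hq.1
      have h1 : Stmt14Aux.stair a b c (p.1.1 + 1) ≤ Stmt14Aux.stair a b c q.1.1 :=
        Stmt14Aux.stair_mono hc (Nat.succ_le_of_lt (Fin.lt_def.mp hlt))
      exact Fin.le_def.mpr (le_trans hp2 (le_trans h1 hq1))
  rw [hset]
  have hinj : Function.Injective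
      (fun c : {c : Fin a → Fin (b + 1) // Monotone c} => Stmt14Aux.F a b c.1) := by
    rintro ⟨c, hc⟩ ⟨c', hc'⟩ h
    simp only at h
    exact Subtype.ext (Stmt14Aux.F_inj hc hc' h)
  rw [← Set.image_univ, Set.ncard_image_of_injective _ hinj, Set.ncard_univ]
  exact Stmt14Aux.count_mono a b
end

section
/- Let K_{a,b} (a,b ≥ 1) be the complete bipartite graph with parts {v_1,…,v_a} and {w_1,…,w_b}. A function f : V → ℤ defines a facet of the symmetric edge polytope P_{K_{a,b}} if and only if, up to adding a constant, either f(v_i)=0 for all i and f(w_j) ∈ {-1,1} for all j, or f(w_j)=0 for all j and f(v_i) ∈ {-1,1} for all i. In particular, P_{K_{a,b}} has exactly 2^a + 2^b - 2 facets. -/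
open Finset

/-- The symmetric edge polytope `P_G = conv{e_v - e_w, e_w - e_v : vw ∈ E(G)} ⊆ ℝ^V`. -/
def symEdgePolytope (V : Type) [Fintype V] [DecidableEq V] (G : SimpleGraph V) :
    Set (V → ℝ) :=
  convexHull ℝ {x : V → ℝ | ∃ v w, G.Adj v w ∧ x = Pi.single v 1 - Pi.single w 1}

/-- `f` defines a facet of `P` via the hyperplane `{x : ∑ v, f v * x v = 1}`:
the hyperplane is valid for `P` and cuts out a nonempty face of affine dimension
`|V| - 2` (codimension one in the ambient hyperplane `∑ x_v = 0`). -/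
def DefinesFacet (V : Type) [Fintype V] [DecidableEq V] (P : Set (V → ℝ)) (f : V → ℝ) :
    Prop :=
  (P ∩ {x | ∑ v, f v * x v = 1}).Nonempty ∧
    (∀ x ∈ P, ∑ v, f v * x v ≤ 1) ∧
    Module.finrank ℝ (affineSpan ℝ (P ∩ {x | ∑ v, f v * x v = 1})).direction
      = Fintype.card V - 2

/-- The complete bipartite graph on `Fin a ⊕ Fin b`. -/
def completeBipartite (a b : ℕ) : SimpleGraph (Fin a ⊕ Fin b) :=
  SimpleGraph.fromRel (fun u v => u.isLeft ∧ v.isRight)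

namespace SEP
open Module

lemma hull_inter {E : Type} [AddCommGroup E] [Module ℝ E] (S : Set E) (ℓ : E →ₗ[ℝ] ℝ)
    (h : ∀ s ∈ S, ℓ s ≤ 1) :
    convexHull ℝ S ∩ {x | ℓ x = 1} = convexHull ℝ {s | s ∈ S ∧ ℓ s = 1} := by
  classical
  apply Set.Subset.antisymm
  · rintro x ⟨hx, hx1⟩
    rw [_root_.convexHull_eq] at hx
    obtain ⟨ι, t, w, z, hw0, hw1, hz, hcm⟩ := hx
    rw [Finset.centerMass_eq_of_sum_1 _ _ hw1] at hcm
    have hl : ∀ i ∈ t, w i ≠ 0 → ℓ (z i) = 1 := by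
      by_contra hcon
      push_neg at hcon
      obtain ⟨i0, hi0, hwi0, hzi0⟩ := hcon
      have hlt : ℓ (z i0) < 1 := lt_of_le_of_ne (h _ (hz _ hi0)) hzi0
      have : ∑ i ∈ t, w i * ℓ (z i) < ∑ i ∈ t, w i := by
        apply Finset.sum_lt_sum
        · intro i hi
          calc w i * ℓ (z i) ≤ w i * 1 := by
                apply mul_le_mul_of_nonneg_left (h _ (hz _ hi)) (hw0 _ hi)
          _ = w i := mul_one _
        · exact ⟨i0, hi0, by nlinarith [lt_of_le_of_ne (hw0 _ hi0) (Ne.symm hwi0)]⟩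
      rw [hw1] at this
      have : ℓ x = ∑ i ∈ t, w i * ℓ (z i) := by
        rw [← hcm]; simp [map_sum, map_smul]
      simp only [Set.mem_setOf_eq] at hx1
      linarith [hx1 ▸ this]
    set t' := t.filter (fun i => w i ≠ 0) with ht'
    have hsum' : ∑ i ∈ t', w i = 1 := by
      rw [← hw1]; exact Finset.sum_filter_of_ne (fun i hi hne => hne)
    have hx' : x = ∑ i ∈ t', w i • z i := by
      rw [← hcm]
      refine (Finset.sum_filter_of_ne ?_).symm
      intro i hi hne hw
      exact hne (by rw [hw, zero_smul])
    rw [hx']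
    have := Finset.centerMass_mem_convexHull (R := ℝ) (s := {s | s ∈ S ∧ ℓ s = 1}) t'
      (w := w) (fun i hi => hw0 i (Finset.mem_filter.mp hi).1) (by rw [hsum']; norm_num)
      (z := z) (fun i hi => show z i ∈ S ∧ ℓ (z i) = 1 from ⟨hz i (Finset.mem_filter.mp hi).1,
        hl i (Finset.mem_filter.mp hi).1 (Finset.mem_filter.mp hi).2⟩)
    rwa [Finset.centerMass_eq_of_sum_1 _ _ hsum'] at this
  · apply Set.subset_inter
    · exact convexHull_mono (fun s hs => hs.1)
    · apply convexHull_min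
      · exact fun s hs => hs.2
      · exact convex_hyperplane ⟨fun x y => map_add ℓ x y, fun c x => map_smul ℓ c x⟩ 1


lemma span2_top (v1 v2 : ℝ × ℝ) (h11 : v1.1 = 1) (h21 : v2.1 = 0) (h22 : v2.2 ≠ 0) :
    Submodule.span ℝ {v1, v2} = ⊤ := by
  rw [Submodule.eq_top_iff']
  intro x
  have hx : x = x.1 • v1 + ((x.2 - x.1 * v1.2) / v2.2) • v2 := by
    apply Prod.ext <;> simp [h11, h21] <;> field_simp <;> ring
  rw [hx]
  exact Submodule.add_mem _
    (Submodule.smul_mem _ _ (Submodule.subset_span (by simp)))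
    (Submodule.smul_mem _ _ (Submodule.subset_span (by simp)))

lemma span3_top (v1 v2 v3 : ℝ × ℝ × ℝ) (h11 : v1.1 = 1) (h21 : v2.1 = 0) (h22 : v2.2.1 = 1)
    (h31 : v3.1 = 0) (h32 : v3.2.1 = 0) (h33 : v3.2.2 ≠ 0) :
    Submodule.span ℝ {v1, v2, v3} = ⊤ := by
  rw [Submodule.eq_top_iff']
  intro x
  have hx : x = x.1 • v1 + (x.2.1 - x.1 * v1.2.1) • v2 +
      ((x.2.2 - x.1 * v1.2.2 - (x.2.1 - x.1 * v1.2.1) * v2.2.2) / v3.2.2) • v3 := by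
    obtain ⟨α, β, γ⟩ := x
    obtain ⟨a1, b1, c1⟩ := v1
    obtain ⟨a2, b2, c2⟩ := v2
    obtain ⟨a3, b3, c3⟩ := v3
    simp only [Prod.mk.injEq, Prod.smul_mk, Prod.mk_add_mk, smul_eq_mul] at *
    subst h11 h21 h22 h31 h32
    refine ⟨by ring, by ring, ?_⟩
    field_simp
    ring
  rw [hx]
  refine Submodule.add_mem _ (Submodule.add_mem _ ?_ ?_) ?_ <;>
    exact Submodule.smul_mem _ _ (Submodule.subset_span (by simp))

lemma range_top_of_span {V W : Type} [Fintype V] [AddCommGroup W] [Module ℝ W]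
    (Φ : (V → ℝ) →ₗ[ℝ] W) (s : Set W) (hs : Submodule.span ℝ s = ⊤)
    (hmem : ∀ w ∈ s, w ∈ LinearMap.range Φ) : LinearMap.range Φ = ⊤ := by
  rw [← top_le_iff, ← hs]
  exact Submodule.span_le.mpr hmem

lemma finrank_ker_of_range_top2 {V : Type} [Fintype V] (Φ : (V → ℝ) →ₗ[ℝ] ℝ × ℝ)
    (h : LinearMap.range Φ = ⊤) :
    finrank ℝ (LinearMap.ker Φ) = Fintype.card V - 2 := by
  have h1 := LinearMap.finrank_range_add_finrank_ker Φ
  rw [h, finrank_top, Module.finrank_pi] at h1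
  have : finrank ℝ (ℝ × ℝ) = 2 := by simp
  omega

lemma finrank_ker_of_range_top3 {V : Type} [Fintype V] (Φ : (V → ℝ) →ₗ[ℝ] ℝ × ℝ × ℝ)
    (h : LinearMap.range Φ = ⊤) :
    finrank ℝ (LinearMap.ker Φ) = Fintype.card V - 3 := by
  have h1 := LinearMap.finrank_range_add_finrank_ker Φ
  rw [h, finrank_top, Module.finrank_pi] at h1
  have : finrank ℝ (ℝ × ℝ × ℝ) = 3 := by simp
  omega


lemma finrank_ge_of_proj {V : Type} [Fintype V] [DecidableEq V] (W : Submodule ℝ (V → ℝ))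
    (v1 v2 : V) (hne : v1 ≠ v2)
    (h : ∀ u : V, u ≠ v1 → u ≠ v2 → ∃ x ∈ W, ∃ c : ℝ, c ≠ 0 ∧
      ∀ u' : V, u' ≠ v1 → u' ≠ v2 → x u' = if u' = u then c else 0) :
    Fintype.card V - 2 ≤ finrank ℝ W := by
  classical
  set s : Finset V := ({v1, v2} : Finset V)ᶜ with hs
  have hmem : ∀ u : V, u ∈ s ↔ u ≠ v1 ∧ u ≠ v2 := by
    intro u; simp [hs]
  let π : (V → ℝ) →ₗ[ℝ] ({x // x ∈ s} → ℝ) := LinearMap.funLeft ℝ ℝ Subtype.val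
  have hmap : Submodule.map π W = ⊤ := by
    rw [Submodule.eq_top_iff']
    intro y
    have hy : y = ∑ u : {x // x ∈ s}, y u • (Pi.single u 1 : {x // x ∈ s} → ℝ) := by
      conv_lhs => rw [← Finset.univ_sum_single y]
      refine Finset.sum_congr rfl fun u _ => ?_
      rw [← Pi.single_smul, smul_eq_mul, mul_one]
    rw [hy]
    apply Submodule.sum_mem
    intro u _
    apply Submodule.smul_mem
    obtain ⟨hu1, hu2⟩ := (hmem u.val).mp u.property
    obtain ⟨x, hxW, c, hc, hx⟩ := h u.val hu1 hu2
    have hπx : π x = c • (Pi.single u 1 : {x // x ∈ s} → ℝ) := by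
      funext u'
      obtain ⟨hu'1, hu'2⟩ := (hmem u'.val).mp u'.property
      have := hx u'.val hu'1 hu'2
      simp only [LinearMap.funLeft_apply, π] at *
      rw [this]
      by_cases he : u' = u
      · subst he; simp
      · rw [if_neg (fun hv => he (Subtype.ext hv))]
        simp [Pi.single_apply, he]
    have : (Pi.single u 1 : {x // x ∈ s} → ℝ) = c⁻¹ • π x := by
      rw [hπx, smul_smul, inv_mul_cancel₀ hc, one_smul]
    rw [this]
    exact Submodule.smul_mem _ _ ⟨x, hxW, rfl⟩
  have h1 : finrank ℝ (Submodule.map π W) ≤ finrank ℝ W := Submodule.finrank_map_le π W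
  rw [hmap, finrank_top, Module.finrank_pi, Fintype.card_coe, hs, Finset.card_compl,
    Finset.card_pair hne] at h1
  exact h1



def lfun {V : Type} [Fintype V] (f : V → ℝ) : (V → ℝ) →ₗ[ℝ] ℝ where
  toFun x := ∑ v, f v * x v
  map_add' x y := by simp [mul_add, Finset.sum_add_distrib]
  map_smul' c x := by
    simp only [Pi.smul_apply, smul_eq_mul, RingHom.id_apply, Finset.mul_sum]
    exact Finset.sum_congr rfl fun v _ => by ring

lemma lfun_apply {V : Type} [Fintype V] (f x : V → ℝ) : lfun f x = ∑ v, f v * x v := rfl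

lemma lfun_single {V : Type} [Fintype V] [DecidableEq V] (f : V → ℝ) (v : V) :
    lfun f (Pi.single v 1) = f v := by
  rw [lfun_apply]
  rw [Finset.sum_eq_single v]
  · simp
  · intro u _ hu; simp [Pi.single_apply, hu]
  · simp

lemma lfun_gen {V : Type} [Fintype V] [DecidableEq V] (f : V → ℝ) (v w : V) :
    lfun f (Pi.single v 1 - Pi.single w 1) = f v - f w := by
  rw [map_sub, lfun_single, lfun_single]

def gen (a b : ℕ) : Set (Fin a ⊕ Fin b → ℝ) :=
  {x | ∃ (i : Fin a) (j : Fin b), x = Pi.single (Sum.inl i) 1 - Pi.single (Sum.inr j) 1 ∨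
    x = Pi.single (Sum.inr j) 1 - Pi.single (Sum.inl i) 1}

lemma P_eq (a b : ℕ) :
    symEdgePolytope (Fin a ⊕ Fin b) (completeBipartite a b) = convexHull ℝ (gen a b) := by
  unfold symEdgePolytope
  congr 1
  ext x
  constructor
  · rintro ⟨v, w, hadj, rfl⟩
    obtain ⟨hne, h⟩ := hadj
    rcases v with i | j <;> rcases w with i' | j' <;> simp_all [gen, completeBipartite]
    · exact ⟨i, j', Or.inl rfl⟩
    · exact ⟨i', j, Or.inr rfl⟩
  · rintro ⟨i, j, h | h⟩
    · exact ⟨Sum.inl i, Sum.inr j, by simp [completeBipartite], h⟩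
    · exact ⟨Sum.inr j, Sum.inl i, by simp [completeBipartite], h⟩

variable {a b : ℕ}

def tset (a b : ℕ) (f : Fin a ⊕ Fin b → ℝ) : Set (Fin a ⊕ Fin b → ℝ) :=
  {g | g ∈ gen a b ∧ lfun f g = 1}

noncomputable def tvec (f : Fin a ⊕ Fin b → ℝ) (i : Fin a) (j : Fin b) : Fin a ⊕ Fin b → ℝ :=
  (f (Sum.inl i) - f (Sum.inr j)) • (Pi.single (Sum.inl i) 1 - Pi.single (Sum.inr j) 1)

lemma tvec_mem (f : Fin a ⊕ Fin b → ℝ) (i : Fin a) (j : Fin b)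
    (h : f (Sum.inl i) - f (Sum.inr j) = 1 ∨ f (Sum.inl i) - f (Sum.inr j) = -1) :
    tvec f i j ∈ tset a b f := by
  constructor
  · rcases h with h | h <;> rw [tvec, h]
    · exact ⟨i, j, Or.inl (by rw [one_smul])⟩
    · exact ⟨i, j, Or.inr (by rw [neg_smul, one_smul, neg_sub])⟩
  · rw [tvec, map_smul, lfun_gen, smul_eq_mul]
    rcases h with h | h <;> rw [h] <;> norm_num

lemma gen_sum_zero (g : Fin a ⊕ Fin b → ℝ) (hg : g ∈ gen a b) :
    lfun (fun _ => (1:ℝ)) g = 0 := by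
  obtain ⟨i, j, h | h⟩ := hg <;> rw [h, lfun_gen] <;> ring

/-- upper bound: vectorSpan of tight set sits in the kernel of (sum, f). -/
lemma dim_tight (ha : 1 ≤ a) (hb : 1 ≤ b) (f : Fin a ⊕ Fin b → ℝ)
    (htight : ∀ (i : Fin a) (j : Fin b),
      f (Sum.inl i) - f (Sum.inr j) = 1 ∨ f (Sum.inl i) - f (Sum.inr j) = -1) :
    finrank ℝ (vectorSpan ℝ (tset a b f)) = a + b - 2 := by
  classical
  set i0 : Fin a := ⟨0, ha⟩
  set j0 : Fin b := ⟨0, hb⟩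
  set Φ : (Fin a ⊕ Fin b → ℝ) →ₗ[ℝ] ℝ × ℝ := (lfun (fun _ => (1:ℝ))).prod (lfun f) with hΦ
  have hPhiT : ∀ g ∈ tset a b f, Φ g = (0, 1) := by
    rintro g ⟨hg, hg1⟩
    simp only [Φ, LinearMap.prod_apply, Function.prod]
    rw [gen_sum_zero g hg, hg1]
  have hker : vectorSpan ℝ (tset a b f) ≤ LinearMap.ker Φ := by
    rw [vectorSpan_def]
    rw [Submodule.span_le]
    rintro x ⟨g, hg, g', hg', rfl⟩
    rw [SetLike.mem_coe, LinearMap.mem_ker]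
    show Φ (g - g') = 0
    rw [map_sub, hPhiT g hg, hPhiT g' hg', sub_self]
  have hrange : LinearMap.range Φ = ⊤ := by
    apply range_top_of_span Φ {Φ (Pi.single (Sum.inl i0) 1), Φ (tvec f i0 j0)}
    · apply span2_top
      · show lfun (fun _ => (1:ℝ)) (Pi.single (Sum.inl i0) 1) = 1
        rw [lfun_single]
      · show lfun (fun _ => (1:ℝ)) (tvec f i0 j0) = 0
        rw [tvec, map_smul, smul_eq_mul, lfun_gen]; ring
      · show lfun f (tvec f i0 j0) ≠ 0
        have := (tvec_mem f i0 j0 (htight i0 j0)).2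
        rw [this]; norm_num
    · rintro w (rfl | rfl)
      · exact ⟨_, rfl⟩
      · exact ⟨_, rfl⟩
  have hupper : finrank ℝ (vectorSpan ℝ (tset a b f)) ≤ a + b - 2 := by
    have := Submodule.finrank_mono hker
    rwa [finrank_ker_of_range_top2 Φ hrange, Fintype.card_sum, Fintype.card_fin,
      Fintype.card_fin] at this
  have hlower : a + b - 2 ≤ finrank ℝ (vectorSpan ℝ (tset a b f)) := by
    have hcard : Fintype.card (Fin a ⊕ Fin b) = a + b := by simp
    rw [← hcard]
    apply finrank_ge_of_proj _ (Sum.inl i0) (Sum.inr j0) (by simp)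
    rintro (i | j) hu1 hu2
    · refine ⟨tvec f i j0 - tvec f i0 j0, ?_, f (Sum.inl i) - f (Sum.inr j0), ?_, ?_⟩
      · exact vsub_mem_vectorSpan ℝ (tvec_mem f i j0 (htight i j0))
          (tvec_mem f i0 j0 (htight i0 j0))
      · rcases htight i j0 with h | h <;> rw [h] <;> norm_num
      · intro u' h1 h2
        simp only [tvec, Pi.sub_apply, Pi.smul_apply, smul_eq_mul, Pi.single_apply,
          h1, h2, if_false]
        split_ifs <;> ring
    · refine ⟨tvec f i0 j - tvec f i0 j0, ?_, -(f (Sum.inl i0) - f (Sum.inr j)), ?_, ?_⟩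
      · exact vsub_mem_vectorSpan ℝ (tvec_mem f i0 j (htight i0 j))
          (tvec_mem f i0 j0 (htight i0 j0))
      · rcases htight i0 j with h | h <;> rw [h] <;> norm_num
      · intro u' h1 h2
        simp only [tvec, Pi.sub_apply, Pi.smul_apply, smul_eq_mul, Pi.single_apply,
          h1, h2, if_false]
        split_ifs <;> ring
  omega

lemma valid_iff_diff (f : Fin a ⊕ Fin b → ℝ) :
    (∀ g ∈ gen a b, lfun f g ≤ 1) ↔
      (∀ (i : Fin a) (j : Fin b), |f (Sum.inl i) - f (Sum.inr j)| ≤ 1) := by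
  constructor
  · intro h i j
    rw [abs_le]
    constructor
    · have := h _ ⟨i, j, Or.inr rfl⟩
      rw [lfun_gen] at this; linarith
    · have := h _ ⟨i, j, Or.inl rfl⟩
      rw [lfun_gen] at this; linarith
  · rintro h g ⟨i, j, rfl | rfl⟩ <;> rw [lfun_gen]
    · exact (abs_le.mp (h i j)).2
    · have := (abs_le.mp (h i j)).1; linarith

lemma valid_of_gen (f : Fin a ⊕ Fin b → ℝ) (h : ∀ g ∈ gen a b, lfun f g ≤ 1) :
    ∀ x ∈ symEdgePolytope (Fin a ⊕ Fin b) (completeBipartite a b), ∑ v, f v * x v ≤ 1 := by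
  rw [P_eq]
  intro x hx
  have : (convexHull ℝ) (gen a b) ⊆ {x | lfun f x ≤ 1} := by
    apply convexHull_min h
    exact convex_halfSpace_le ⟨fun x y => map_add (lfun f) x y, fun c x => map_smul (lfun f) c x⟩ 1
  exact this hx

lemma face_eq (f : Fin a ⊕ Fin b → ℝ) (hval : ∀ g ∈ gen a b, lfun f g ≤ 1) :
    symEdgePolytope (Fin a ⊕ Fin b) (completeBipartite a b) ∩ {x | ∑ v, f v * x v = 1}
      = convexHull ℝ (tset a b f) := by
  rw [P_eq]
  exact hull_inter (gen a b) (lfun f) hval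

lemma facet_of_tight (ha : 1 ≤ a) (hb : 1 ≤ b) (f : Fin a ⊕ Fin b → ℝ)
    (htight : ∀ (i : Fin a) (j : Fin b),
      f (Sum.inl i) - f (Sum.inr j) = 1 ∨ f (Sum.inl i) - f (Sum.inr j) = -1) :
    DefinesFacet (Fin a ⊕ Fin b)
      (symEdgePolytope (Fin a ⊕ Fin b) (completeBipartite a b)) f := by
  have hval : ∀ g ∈ gen a b, lfun f g ≤ 1 := by
    rw [valid_iff_diff]
    intro i j
    rcases htight i j with h | h <;> rw [abs_le] <;> constructor <;> linarith
  refine ⟨?_, valid_of_gen f hval, ?_⟩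
  · refine ⟨tvec f ⟨0, ha⟩ ⟨0, hb⟩, ?_, ?_⟩
    · rw [P_eq]
      exact subset_convexHull ℝ _ (tvec_mem f _ _ (htight _ _)).1
    · exact (tvec_mem f ⟨0, ha⟩ ⟨0, hb⟩ (htight _ _)).2
  · rw [face_eq f hval, affineSpan_convexHull, direction_affineSpan,
      dim_tight ha hb f htight]
    simp

lemma dim_cut (f : Fin a ⊕ Fin b → ℝ) (S : Finset (Fin a ⊕ Fin b))
    (hresp : ∀ g ∈ tset a b f, ∑ v ∈ S, g v = 0)
    (p : Fin a ⊕ Fin b) (hp : p ∈ S) (q : Fin a ⊕ Fin b) (hq : q ∉ S)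
    (r r' : Fin a ⊕ Fin b) (hrr' : f r ≠ f r') (hside : (r ∈ S) = (r' ∈ S)) :
    finrank ℝ (vectorSpan ℝ (tset a b f)) ≤ a + b - 3 := by
  classical
  set χ : Fin a ⊕ Fin b → ℝ := fun v => if v ∈ S then 1 else 0 with hχ
  have hχ_eval : ∀ x : Fin a ⊕ Fin b → ℝ, lfun χ x = ∑ v ∈ S, x v := by
    intro x
    rw [lfun_apply]
    rw [← Finset.sum_filter_of_ne (f := fun v => χ v * x v) (s := Finset.univ) (p := fun v => v ∈ S)]
    · rw [Finset.filter_mem_eq_inter, Finset.univ_inter]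
      exact Finset.sum_congr rfl fun v hv => by simp [hχ, hv]
    · intro v _ hne
      by_contra hvS
      exact hne (by simp [hχ, hvS])
  set Φ : (Fin a ⊕ Fin b → ℝ) →ₗ[ℝ] ℝ × ℝ × ℝ :=
    (lfun χ).prod ((lfun (fun _ => (1:ℝ))).prod (lfun f)) with hΦ
  have hPhiT : ∀ g ∈ tset a b f, Φ g = (0, 0, 1) := by
    rintro g hg
    obtain ⟨hgen, hg1⟩ := hg
    simp only [Φ, LinearMap.prod_apply, Function.prod]
    rw [hχ_eval, hresp g ⟨hgen, hg1⟩, gen_sum_zero g hgen, hg1]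
  have hker : vectorSpan ℝ (tset a b f) ≤ LinearMap.ker Φ := by
    rw [vectorSpan_def, Submodule.span_le]
    rintro x ⟨g, hg, g', hg', rfl⟩
    rw [SetLike.mem_coe, LinearMap.mem_ker]
    show Φ (g - g') = 0
    rw [map_sub, hPhiT g hg, hPhiT g' hg', sub_self]
  have hrange : LinearMap.range Φ = ⊤ := by
    apply range_top_of_span Φ
      {Φ (Pi.single p 1), Φ (Pi.single q 1), Φ (Pi.single r 1 - Pi.single r' 1)}
    · apply span3_top
      · show lfun χ (Pi.single p 1) = 1
        rw [lfun_single]; simp [hχ, hp]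
      · show lfun χ (Pi.single q 1) = 0
        rw [lfun_single]; simp [hχ, hq]
      · show lfun (fun _ => (1:ℝ)) (Pi.single q 1) = 1
        rw [lfun_single]
      · show lfun χ (Pi.single r 1 - Pi.single r' 1) = 0
        rw [map_sub, lfun_single, lfun_single]
        simp only [hχ, hside]
        by_cases h : r' ∈ S
        · rw [hside] at *; simp [h]
        · rw [hside] at *; simp [h]
      · show lfun (fun _ => (1:ℝ)) (Pi.single r 1 - Pi.single r' 1) = 0
        rw [map_sub, lfun_single, lfun_single]; ring
      · show lfun f (Pi.single r 1 - Pi.single r' 1) ≠ 0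
        rw [map_sub, lfun_single, lfun_single]
        exact sub_ne_zero_of_ne hrr'
    · rintro w (rfl | rfl | rfl)
      · exact ⟨_, rfl⟩
      · exact ⟨_, rfl⟩
      · exact ⟨_, rfl⟩
  have := Submodule.finrank_mono hker
  rwa [finrank_ker_of_range_top3 Φ hrange, Fintype.card_sum, Fintype.card_fin,
    Fintype.card_fin] at this

def Tight (f : Fin a ⊕ Fin b → ℝ) (i : Fin a) (j : Fin b) : Prop :=
  |f (Sum.inl i) - f (Sum.inr j)| = 1

def IsCut (f : Fin a ⊕ Fin b → ℝ) (S : Finset (Fin a ⊕ Fin b)) : Prop :=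
  (∀ i j, Tight f i j → ((Sum.inl i ∈ S) ↔ (Sum.inr j ∈ S))) ∧
  (∃ p, p ∈ S) ∧ (∃ q, q ∉ S) ∧ (∃ r r', f r ≠ f r' ∧ ((r ∈ S) ↔ (r' ∈ S)))

lemma structure_lemma (ha : 1 ≤ a) (hb : 1 ≤ b) (f : Fin a ⊕ Fin b → ℝ)
    (hle : ∀ (i : Fin a) (j : Fin b), |f (Sum.inl i) - f (Sum.inr j)| ≤ 1)
    (hex : ∃ i j, Tight f i j)
    (hnocut : ∀ S : Finset (Fin a ⊕ Fin b), ¬ IsCut f S) :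
    ∀ i j, Tight f i j := by
  classical
  by_cases hconst : ∀ i i' : Fin a, f (Sum.inl i) = f (Sum.inl i')
  · -- left side constant
    intro i j
    by_contra hnt
    by_cases hcc : ∀ j', j' ≠ j → f (Sum.inr j') = f (Sum.inl i)
    · -- then no tight edges at all, contradicting hex
      obtain ⟨i1, j1, ht⟩ := hex
      by_cases hj : j1 = j
      · subst hj
        rw [Tight, hconst i1 i] at ht
        exact hnt ht
      · rw [Tight, hconst i1 i, hcc j1 hj] at ht
        rw [hconst i i] at ht
        simp at ht
    · push_neg at hcc
      obtain ⟨j', hj', hfj'⟩ := hcc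
      apply hnocut {Sum.inr j}
      refine ⟨?_, ⟨Sum.inr j, Finset.mem_singleton_self _⟩,
        ⟨Sum.inl i, by simp⟩, Sum.inr j', Sum.inl i, hfj', ?_⟩
      · intro i'' j'' ht
        have hj'' : j'' ≠ j := by
          rintro rfl
          rw [Tight, hconst i'' i] at ht
          exact hnt ht
        simp [hj'']
      · simp [hj']
  · -- left side nonconstant
    push_neg at hconst
    obtain ⟨i1, i2, h12⟩ := hconst
    have huA : (Finset.univ : Finset (Fin a)).Nonempty := ⟨i1, Finset.mem_univ _⟩
    have huB : (Finset.univ : Finset (Fin b)).Nonempty := ⟨⟨0, hb⟩, Finset.mem_univ _⟩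
    -- Step 1: right side constant
    have hrc : ∀ j j', f (Sum.inr j) = f (Sum.inr j') := by
      by_contra hrcon
      push_neg at hrcon
      obtain ⟨j1, j2, hj12⟩ := hrcon
      obtain ⟨iM, -, hiM⟩ := Finset.exists_max_image Finset.univ (fun i => f (Sum.inl i)) huA
      obtain ⟨im, -, him⟩ := Finset.exists_min_image Finset.univ (fun i => f (Sum.inl i)) huA
      obtain ⟨jM, -, hjM⟩ := Finset.exists_max_image Finset.univ (fun j => f (Sum.inr j)) huB
      obtain ⟨jm, -, hjm⟩ := Finset.exists_min_image Finset.univ (fun j => f (Sum.inr j)) huB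
      have hαlt : f (Sum.inl im) < f (Sum.inl iM) := by
        by_contra h
        push_neg at h
        exact h12 (by
          have := hiM i1 (Finset.mem_univ _)
          have := hiM i2 (Finset.mem_univ _)
          have := him i1 (Finset.mem_univ _)
          have := him i2 (Finset.mem_univ _)
          linarith)
      have hβlt : f (Sum.inr jm) < f (Sum.inr jM) := by
        by_contra h
        push_neg at h
        exact hj12 (by
          have := hjM j1 (Finset.mem_univ _)
          have := hjM j2 (Finset.mem_univ _)
          have := hjm j1 (Finset.mem_univ _)
          have := hjm j2 (Finset.mem_univ _)
          linarith)
      have c1 : f (Sum.inl iM) - f (Sum.inr jm) ≤ 1 := (abs_le.mp (hle iM jm)).2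
      have c2 : f (Sum.inr jM) - f (Sum.inl im) ≤ 1 := by
        have := (abs_le.mp (hle im jM)).1; linarith
      set S : Finset (Fin a ⊕ Fin b) := Finset.univ.filter
        (fun u => Sum.elim (fun i => f (Sum.inl i) = f (Sum.inl iM))
          (fun j => f (Sum.inr j) = f (Sum.inr jm)) u) with hS
      have hmemL : ∀ i : Fin a, Sum.inl i ∈ S ↔ f (Sum.inl i) = f (Sum.inl iM) := by
        intro i; simp [hS]
      have hmemR : ∀ j : Fin b, Sum.inr j ∈ S ↔ f (Sum.inr j) = f (Sum.inr jm) := by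
        intro j; simp [hS]
      apply hnocut S
      refine ⟨?_, ⟨Sum.inl iM, (hmemL iM).mpr rfl⟩, ⟨Sum.inl im, ?_⟩, ?_⟩
      · intro i j ht
        rw [Tight, abs_eq (by norm_num)] at ht
        rcases ht with ht | ht
        · have h1 : f (Sum.inl i) = f (Sum.inl iM) := by
            have := hjm j (Finset.mem_univ _)
            have := hiM i (Finset.mem_univ _)
            linarith
          have h2 : f (Sum.inr j) = f (Sum.inr jm) := by
            have := hjm j (Finset.mem_univ _)
            linarith
          rw [hmemL, hmemR, h1, h2]
          simp
        · have h1 : f (Sum.inl i) = f (Sum.inl im) := by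
            have := hjM j (Finset.mem_univ _)
            have := him i (Finset.mem_univ _)
            linarith
          have h2 : f (Sum.inr j) = f (Sum.inr jM) := by
            have := hjM j (Finset.mem_univ _)
            linarith
          rw [hmemL, hmemR, h1, h2]
          constructor
          · intro h; linarith
          · intro h; linarith
      · rw [hmemL]; intro h; linarith
      · by_cases hMm : f (Sum.inl iM) = f (Sum.inr jm)
        · refine ⟨Sum.inl im, Sum.inr jM, ?_, ?_⟩
          · intro h; rw [h] at hαlt
            have := hjM jm (Finset.mem_univ _)
            linarith
          · rw [hmemL, hmemR]
            constructor
            · intro h; linarith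
            · intro h; linarith
        · exact ⟨Sum.inl iM, Sum.inr jm, hMm, by rw [hmemL, hmemR]; simp⟩
    -- Step 2: all edges tight
    intro i j
    by_contra hnt
    by_cases hcc : ∀ i', i' ≠ i → f (Sum.inl i') = f (Sum.inr j)
    · obtain ⟨it, jt, ht⟩ := hex
      by_cases hi : it = i
      · subst hi
        rw [Tight, hrc jt j] at ht
        exact hnt ht
      · rw [Tight, hcc it hi, hrc jt j] at ht
        simp at ht
    · push_neg at hcc
      obtain ⟨i', hi', hfi'⟩ := hcc
      apply hnocut {Sum.inl i}
      refine ⟨?_, ⟨Sum.inl i, Finset.mem_singleton_self _⟩,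
        ⟨Sum.inr j, by simp⟩, Sum.inl i', Sum.inr j, hfi', ?_⟩
      · intro i'' j'' ht
        have hi'' : i'' ≠ i := by
          rintro rfl
          rw [Tight, hrc j'' j] at ht
          exact hnt ht
        simp [hi'']
      · simp [hi']

lemma three_le_card {α : Type} [Fintype α] [DecidableEq α] (x y z : α)
    (h1 : x ≠ y) (h2 : x ≠ z) (h3 : y ≠ z) : 3 ≤ Fintype.card α := by
  have hc : ({x, y, z} : Finset α).card = 3 := by
    rw [Finset.card_insert_of_notMem (by simp [h1, h2]),
      Finset.card_insert_of_notMem (by simp [h3]), Finset.card_singleton]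
  calc 3 = ({x, y, z} : Finset α).card := hc.symm
  _ ≤ Fintype.card α := Finset.card_le_univ _

lemma sum_single_mem (S : Finset (Fin a ⊕ Fin b)) (u : Fin a ⊕ Fin b) :
    ∑ v ∈ S, Pi.single u (1:ℝ) v = if u ∈ S then 1 else 0 := by
  classical
  simp only [Pi.single_apply]
  exact Finset.sum_ite_eq' S u (fun _ => 1)

lemma tight_of_facet (ha : 1 ≤ a) (hb : 1 ≤ b) (f : Fin a ⊕ Fin b → ℝ)
    (hf : DefinesFacet (Fin a ⊕ Fin b)
      (symEdgePolytope (Fin a ⊕ Fin b) (completeBipartite a b)) f) :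
    ∀ (i : Fin a) (j : Fin b),
      f (Sum.inl i) - f (Sum.inr j) = 1 ∨ f (Sum.inl i) - f (Sum.inr j) = -1 := by
  classical
  obtain ⟨hne, hval, hrank⟩ := hf
  have hgen : ∀ g ∈ gen a b, lfun f g ≤ 1 := by
    intro g hg
    exact hval g (by rw [P_eq]; exact subset_convexHull ℝ _ hg)
  have hle := (valid_iff_diff f).mp hgen
  rw [face_eq f hgen] at hne hrank
  rw [affineSpan_convexHull, direction_affineSpan] at hrank
  have hex : ∃ i j, Tight f i j := by
    rw [convexHull_nonempty_iff] at hne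
    obtain ⟨g, ⟨i, j, hg | hg⟩, hg1⟩ := hne
    · refine ⟨i, j, ?_⟩
      rw [hg, lfun_gen] at hg1
      rw [Tight, hg1]; norm_num
    · refine ⟨i, j, ?_⟩
      rw [hg, lfun_gen] at hg1
      rw [Tight, show f (Sum.inl i) - f (Sum.inr j) = -1 by linarith]
      norm_num
  have hnocut : ∀ S, ¬ IsCut f S := by
    rintro S ⟨hrespect, ⟨p, hp⟩, ⟨q, hq⟩, r, r', hrr', hside⟩
    have hresp : ∀ g ∈ tset a b f, ∑ v ∈ S, g v = 0 := by
      rintro g ⟨⟨i, j, hg | hg⟩, hg1⟩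
      · rw [hg, lfun_gen] at hg1
        have ht : Tight f i j := by rw [Tight, hg1]; norm_num
        have := hrespect i j ht
        rw [hg]
        simp only [Pi.sub_apply]
        rw [Finset.sum_sub_distrib, sum_single_mem, sum_single_mem]
        by_cases h : Sum.inl i ∈ S
        · rw [if_pos h, if_pos (this.mp h), sub_self]
        · rw [if_neg h, if_neg (fun hh => h (this.mpr hh)), sub_self]
      · rw [hg, lfun_gen] at hg1
        have ht : Tight f i j := by
          rw [Tight, show f (Sum.inl i) - f (Sum.inr j) = -1 by linarith]; norm_num
        have := hrespect i j ht
        rw [hg]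
        simp only [Pi.sub_apply]
        rw [Finset.sum_sub_distrib, sum_single_mem, sum_single_mem]
        by_cases h : Sum.inl i ∈ S
        · rw [if_pos h, if_pos (this.mp h), sub_self]
        · rw [if_neg h, if_neg (fun hh => h (this.mpr hh)), sub_self]
    have hdim := dim_cut f S hresp p hp q hq r r' hrr' (propext hside)
    have hab3 : 3 ≤ a + b := by
      have hcard : Fintype.card (Fin a ⊕ Fin b) = a + b := by simp
      rw [← hcard]
      by_cases h : r ∈ S
      · have h' : r' ∈ S := hside.mp h
        exact three_le_card q r r' (fun hh => hq (hh ▸ h)) (fun hh => hq (hh ▸ h'))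
          (fun hh => hrr' (by rw [hh]))
      · have h' : r' ∉ S := fun hh => h (hside.mpr hh)
        exact three_le_card p r r' (fun hh => h (hh ▸ hp)) (fun hh => h' (hh ▸ hp))
          (fun hh => hrr' (by rw [hh]))
    rw [hrank] at hdim
    revert hdim
    simp only [Fintype.card_sum, Fintype.card_fin]
    omega
  have hall := structure_lemma ha hb f hle hex hnocut
  intro i j
  have := hall i j
  rw [Tight, abs_eq (by norm_num : (0:ℝ) ≤ 1)] at this
  exact this

lemma tight_valid (f : Fin a ⊕ Fin b → ℝ)
    (htight : ∀ (i : Fin a) (j : Fin b),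
      f (Sum.inl i) - f (Sum.inr j) = 1 ∨ f (Sum.inl i) - f (Sum.inr j) = -1) :
    ∀ g ∈ gen a b, lfun f g ≤ 1 := by
  rw [valid_iff_diff]
  intro i j
  rcases htight i j with h | h <;> rw [abs_le] <;> constructor <;> linarith

lemma tset_congr (f f' : Fin a ⊕ Fin b → ℝ)
    (h : ∀ g ∈ gen a b, lfun f g = lfun f' g) : tset a b f = tset a b f' :=
  Set.ext fun g => and_congr_right fun hg => by rw [h g hg]

def faceOf (a b : ℕ) (f : Fin a ⊕ Fin b → ℝ) : Set (Fin a ⊕ Fin b → ℝ) :=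
  symEdgePolytope (Fin a ⊕ Fin b) (completeBipartite a b) ∩ {x | ∑ v, f v * x v = 1}

lemma faceOf_congr (f f' : Fin a ⊕ Fin b → ℝ)
    (htight : ∀ (i : Fin a) (j : Fin b),
      f (Sum.inl i) - f (Sum.inr j) = 1 ∨ f (Sum.inl i) - f (Sum.inr j) = -1)
    (htight' : ∀ (i : Fin a) (j : Fin b),
      f' (Sum.inl i) - f' (Sum.inr j) = 1 ∨ f' (Sum.inl i) - f' (Sum.inr j) = -1)
    (h : ∀ g ∈ gen a b, lfun f g = lfun f' g) :
    faceOf a b f = faceOf a b f' := by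
  unfold faceOf
  rw [face_eq f (tight_valid f htight), face_eq f' (tight_valid f' htight'),
    tset_congr f f' h]

lemma mem_face_iff (f : Fin a ⊕ Fin b → ℝ)
    (htight : ∀ (i : Fin a) (j : Fin b),
      f (Sum.inl i) - f (Sum.inr j) = 1 ∨ f (Sum.inl i) - f (Sum.inr j) = -1)
    (g : Fin a ⊕ Fin b → ℝ) (hg : g ∈ gen a b) :
    g ∈ faceOf a b f ↔ lfun f g = 1 := by
  constructor
  · rintro ⟨-, h1⟩
    exact h1
  · intro h1
    rw [faceOf, face_eq f (tight_valid f htight)]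
    exact subset_convexHull ℝ _ ⟨hg, h1⟩

def fL (a b : ℕ) (Q : Finset (Fin b)) : Fin a ⊕ Fin b → ℝ :=
  Sum.elim (fun _ => 0) (fun j => if j ∈ Q then 1 else -1)

def fR (a b : ℕ) (Q : Finset (Fin a)) : Fin a ⊕ Fin b → ℝ :=
  Sum.elim (fun i => if i ∈ Q then 1 else -1) (fun _ => 0)

lemma fL_tight (Q : Finset (Fin b)) : ∀ (i : Fin a) (j : Fin b),
    fL a b Q (Sum.inl i) - fL a b Q (Sum.inr j) = 1 ∨
      fL a b Q (Sum.inl i) - fL a b Q (Sum.inr j) = -1 := by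
  intro i j
  simp only [fL, Sum.elim_inl, Sum.elim_inr]
  by_cases h : j ∈ Q <;> simp [h]

lemma fR_tight (Q : Finset (Fin a)) : ∀ (i : Fin a) (j : Fin b),
    fR a b Q (Sum.inl i) - fR a b Q (Sum.inr j) = 1 ∨
      fR a b Q (Sum.inl i) - fR a b Q (Sum.inr j) = -1 := by
  intro i j
  simp only [fR, Sum.elim_inl, Sum.elim_inr]
  by_cases h : i ∈ Q <;> simp [h]

/-- the test generator for the left family -/
noncomputable def gtest (a b : ℕ) (ha : 1 ≤ a) (j : Fin b) : Fin a ⊕ Fin b → ℝ :=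
  Pi.single (Sum.inr j) 1 - Pi.single (Sum.inl ⟨0, ha⟩) 1

lemma gtest_mem_gen (ha : 1 ≤ a) (j : Fin b) : gtest a b ha j ∈ gen a b :=
  ⟨⟨0, ha⟩, j, Or.inr rfl⟩

lemma gtest_mem_faceL (ha : 1 ≤ a) (Q : Finset (Fin b)) (j : Fin b) :
    gtest a b ha j ∈ faceOf a b (fL a b Q) ↔ j ∈ Q := by
  rw [mem_face_iff _ (fL_tight Q) _ (gtest_mem_gen ha j), gtest, lfun_gen]
  simp only [fL, Sum.elim_inl, Sum.elim_inr]
  by_cases h : j ∈ Q <;> simp [h] <;> norm_num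

lemma faceL_inj (ha : 1 ≤ a) :
    Function.Injective (fun Q : Finset (Fin b) => faceOf a b (fL a b Q)) := by
  intro Q Q' h
  ext j
  rw [← gtest_mem_faceL ha Q j, ← gtest_mem_faceL ha Q' j]
  simp only at h
  rw [h]

noncomputable def htest (a b : ℕ) (hb : 1 ≤ b) (i : Fin a) : Fin a ⊕ Fin b → ℝ :=
  Pi.single (Sum.inl i) 1 - Pi.single (Sum.inr ⟨0, hb⟩) 1

lemma htest_mem_gen (hb : 1 ≤ b) (i : Fin a) : htest a b hb i ∈ gen a b :=
  ⟨i, ⟨0, hb⟩, Or.inl rfl⟩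

lemma htest_mem_faceR (hb : 1 ≤ b) (Q : Finset (Fin a)) (i : Fin a) :
    htest a b hb i ∈ faceOf a b (fR a b Q) ↔ i ∈ Q := by
  rw [mem_face_iff _ (fR_tight Q) _ (htest_mem_gen hb i), htest, lfun_gen]
  simp only [fR, Sum.elim_inl, Sum.elim_inr]
  by_cases h : i ∈ Q <;> simp [h] <;> norm_num

lemma faceR_inj (hb : 1 ≤ b) :
    Function.Injective (fun Q : Finset (Fin a) => faceOf a b (fR a b Q)) := by
  intro Q Q' h
  ext i
  rw [← htest_mem_faceR hb Q i, ← htest_mem_faceR hb Q' i]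
  simp only at h
  rw [h]

lemma dichotomy (f : Fin a ⊕ Fin b → ℝ)
    (htight : ∀ (i : Fin a) (j : Fin b),
      f (Sum.inl i) - f (Sum.inr j) = 1 ∨ f (Sum.inl i) - f (Sum.inr j) = -1) :
    (∀ i i' : Fin a, f (Sum.inl i) = f (Sum.inl i')) ∨
      (∀ j j' : Fin b, f (Sum.inr j) = f (Sum.inr j')) := by
  by_cases h : ∀ i i' : Fin a, f (Sum.inl i) = f (Sum.inl i')
  · exact Or.inl h
  · push_neg at h
    obtain ⟨i1, i2, h12⟩ := h
    refine Or.inr fun j j' => ?_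
    rcases htight i1 j with h1 | h1 <;> rcases htight i2 j with h2 | h2 <;>
      rcases htight i1 j' with h3 | h3 <;> rcases htight i2 j' with h4 | h4 <;>
      first
        | linarith
        | (exfalso; exact h12 (by linarith))

lemma int_char (ha : 1 ≤ a) (hb : 1 ≤ b) (f : Fin a ⊕ Fin b → ℤ) :
    (∀ (i : Fin a) (j : Fin b),
        ((f (Sum.inl i) : ℝ) - (f (Sum.inr j) : ℝ) = 1 ∨
          (f (Sum.inl i) : ℝ) - (f (Sum.inr j) : ℝ) = -1))
      ↔ (∃ k : ℤ,
          ((∀ i : Fin a, f (Sum.inl i) = k) ∧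
              ∀ j : Fin b, f (Sum.inr j) = k - 1 ∨ f (Sum.inr j) = k + 1) ∨
            ((∀ j : Fin b, f (Sum.inr j) = k) ∧
              ∀ i : Fin a, f (Sum.inl i) = k - 1 ∨ f (Sum.inl i) = k + 1)) := by
  have hcast : (∀ (i : Fin a) (j : Fin b),
      ((f (Sum.inl i) : ℝ) - (f (Sum.inr j) : ℝ) = 1 ∨
        (f (Sum.inl i) : ℝ) - (f (Sum.inr j) : ℝ) = -1)) ↔
      (∀ (i : Fin a) (j : Fin b),
        (f (Sum.inl i) - f (Sum.inr j) = 1 ∨ f (Sum.inl i) - f (Sum.inr j) = -1)) := by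
    constructor <;> intro h i j <;> rcases h i j with h' | h'
    · left; exact_mod_cast h'
    · right; exact_mod_cast h'
    · left; exact_mod_cast h'
    · right; exact_mod_cast h'
  rw [hcast]
  constructor
  · intro h
    by_cases hconst : ∀ i, f (Sum.inl i) = f (Sum.inl ⟨0, ha⟩)
    · exact ⟨f (Sum.inl ⟨0, ha⟩), Or.inl ⟨hconst,
        fun j => by rcases h ⟨0, ha⟩ j with h' | h' <;> omega⟩⟩
    · push_neg at hconst
      obtain ⟨i1, h1⟩ := hconst
      refine ⟨f (Sum.inr ⟨0, hb⟩), Or.inr ⟨fun j => ?_,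
        fun i => by rcases h i ⟨0, hb⟩ with h' | h' <;> omega⟩⟩
      rcases h i1 j with h' | h' <;> rcases h ⟨0, ha⟩ j with h'' | h'' <;>
        rcases h i1 ⟨0, hb⟩ with h3 | h3 <;> rcases h ⟨0, ha⟩ ⟨0, hb⟩ with h4 | h4 <;> omega
  · rintro ⟨k, ⟨hL, hR⟩ | ⟨hR, hL⟩⟩ i j
    · have := hL i; rcases hR j with h' | h' <;> omega
    · have := hR j; rcases hL i with h' | h' <;> omega

lemma face_in_AB (ha : 1 ≤ a) (hb : 1 ≤ b) (f : Fin a ⊕ Fin b → ℝ)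
    (hf : DefinesFacet (Fin a ⊕ Fin b)
      (symEdgePolytope (Fin a ⊕ Fin b) (completeBipartite a b)) f) :
    (∃ Q : Finset (Fin b), faceOf a b f = faceOf a b (fL a b Q)) ∨
      (∃ Q : Finset (Fin a), faceOf a b f = faceOf a b (fR a b Q)) := by
  classical
  have htight := tight_of_facet ha hb f hf
  rcases dichotomy f htight with hc | hc
  · -- left constant
    set c := f (Sum.inl ⟨0, ha⟩) with hcdef
    set Q : Finset (Fin b) := Finset.univ.filter (fun j => f (Sum.inr j) = c + 1) with hQ
    left
    refine ⟨Q, faceOf_congr f (fL a b Q) htight (fL_tight Q) ?_⟩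
    rintro g ⟨i, j, rfl | rfl⟩ <;> rw [lfun_gen, lfun_gen] <;>
      simp only [fL, Sum.elim_inl, Sum.elim_inr] <;>
      have hci : f (Sum.inl i) = c := hc i ⟨0, ha⟩ <;>
      rcases htight i j with h | h
    · have hjQ : j ∉ Q := by simp [hQ]; intro hh; rw [hh] at h; linarith
      rw [if_neg hjQ]; linarith
    · have hjQ : j ∈ Q := by simp [hQ]; linarith
      rw [if_pos hjQ]; linarith
    · have hjQ : j ∉ Q := by simp [hQ]; intro hh; rw [hh] at h; linarith
      rw [if_neg hjQ]; linarith
    · have hjQ : j ∈ Q := by simp [hQ]; linarith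
      rw [if_pos hjQ]; linarith
  · -- right constant
    set c := f (Sum.inr ⟨0, hb⟩) with hcdef
    set Q : Finset (Fin a) := Finset.univ.filter (fun i => f (Sum.inl i) = c + 1) with hQ
    right
    refine ⟨Q, faceOf_congr f (fR a b Q) htight (fR_tight Q) ?_⟩
    rintro g ⟨i, j, rfl | rfl⟩ <;> rw [lfun_gen, lfun_gen] <;>
      simp only [fR, Sum.elim_inl, Sum.elim_inr] <;>
      have hcj : f (Sum.inr j) = c := hc j ⟨0, hb⟩ <;>
      rcases htight i j with h | h
    · have hiQ : i ∈ Q := by simp [hQ]; linarith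
      rw [if_pos hiQ]; linarith
    · have hiQ : i ∉ Q := by simp [hQ]; intro hh; rw [hh] at h; linarith
      rw [if_neg hiQ]; linarith
    · have hiQ : i ∈ Q := by simp [hQ]; linarith
      rw [if_pos hiQ]; linarith
    · have hiQ : i ∉ Q := by simp [hQ]; intro hh; rw [hh] at h; linarith
      rw [if_neg hiQ]; linarith

lemma AB_inter (ha : 1 ≤ a) (hb : 1 ≤ b) :
    (Set.range (fun Q : Finset (Fin b) => faceOf a b (fL a b Q))) ∩
      (Set.range (fun Q : Finset (Fin a) => faceOf a b (fR a b Q)))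
    = {faceOf a b (fL a b Finset.univ), faceOf a b (fL a b ∅)} := by
  classical
  apply Set.Subset.antisymm
  · rintro F ⟨⟨Q, rfl⟩, ⟨Q', hQ'⟩⟩
    simp only at hQ'
    have hQor : Q = Finset.univ ∨ Q = ∅ := by
      by_contra hcon
      push_neg at hcon
      obtain ⟨hQu, hQe⟩ := hcon
      obtain ⟨j', hj'⟩ : ∃ j', j' ∉ Q := by
        by_contra hh; push_neg at hh
        exact hQu (Finset.eq_univ_iff_forall.mpr hh)
      obtain ⟨j, hj⟩ : ∃ j, j ∈ Q := hQe
      have h1 : gtest a b ha j ∈ faceOf a b (fL a b Q) := (gtest_mem_faceL ha Q j).mpr hj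
      rw [← hQ'] at h1
      have h1' := (mem_face_iff _ (fR_tight Q') _ (gtest_mem_gen ha j)).mp h1
      rw [gtest, lfun_gen] at h1'
      simp only [fR, Sum.elim_inl, Sum.elim_inr] at h1'
      have hi0 : (⟨0, ha⟩ : Fin a) ∉ Q' := by
        by_contra hh; rw [if_pos hh] at h1'; linarith
      have h2 : Pi.single (Sum.inl (⟨0, ha⟩ : Fin a)) (1:ℝ) - Pi.single (Sum.inr j') 1 ∈
          faceOf a b (fL a b Q) := by
        rw [mem_face_iff _ (fL_tight Q) _ ⟨⟨0, ha⟩, j', Or.inl rfl⟩, lfun_gen]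
        simp only [fL, Sum.elim_inl, Sum.elim_inr]
        rw [if_neg hj']; ring
      rw [← hQ'] at h2
      have h2' := (mem_face_iff _ (fR_tight Q') _ ⟨⟨0, ha⟩, j', Or.inl rfl⟩).mp h2
      rw [lfun_gen] at h2'
      simp only [fR, Sum.elim_inl, Sum.elim_inr] at h2'
      rw [if_neg hi0] at h2'
      linarith
    rcases hQor with rfl | rfl
    · exact Or.inl rfl
    · exact Or.inr rfl
  · rintro F (rfl | rfl)
    · refine ⟨⟨Finset.univ, rfl⟩, ⟨∅, ?_⟩⟩
      refine faceOf_congr _ _ (fR_tight ∅) (fL_tight Finset.univ) ?_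
      rintro g ⟨i, j, rfl | rfl⟩ <;> rw [lfun_gen, lfun_gen] <;> simp [fL, fR]
    · refine ⟨⟨∅, rfl⟩, ⟨Finset.univ, ?_⟩⟩
      refine faceOf_congr _ _ (fR_tight Finset.univ) (fL_tight ∅) ?_
      rintro g ⟨i, j, rfl | rfl⟩ <;> rw [lfun_gen, lfun_gen] <;> simp [fL, fR]

lemma count_faces (ha : 1 ≤ a) (hb : 1 ≤ b) :
    {F : Set (Fin a ⊕ Fin b → ℝ) |
        ∃ f : Fin a ⊕ Fin b → ℝ,
          DefinesFacet (Fin a ⊕ Fin b)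
            (symEdgePolytope (Fin a ⊕ Fin b) (completeBipartite a b)) f ∧
          F = symEdgePolytope (Fin a ⊕ Fin b) (completeBipartite a b)
            ∩ {x | ∑ v, f v * x v = 1}}.ncard
      = 2 ^ a + 2 ^ b - 2 := by
  classical
  set A := Set.range (fun Q : Finset (Fin b) => faceOf a b (fL a b Q)) with hA
  set B := Set.range (fun Q : Finset (Fin a) => faceOf a b (fR a b Q)) with hB
  have hset : {F : Set (Fin a ⊕ Fin b → ℝ) |
      ∃ f : Fin a ⊕ Fin b → ℝ,
        DefinesFacet (Fin a ⊕ Fin b)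
          (symEdgePolytope (Fin a ⊕ Fin b) (completeBipartite a b)) f ∧
        F = symEdgePolytope (Fin a ⊕ Fin b) (completeBipartite a b)
          ∩ {x | ∑ v, f v * x v = 1}} = A ∪ B := by
    apply Set.Subset.antisymm
    · rintro F ⟨f, hf, rfl⟩
      rcases face_in_AB ha hb f hf with ⟨Q, hQ⟩ | ⟨Q, hQ⟩
      · exact Or.inl ⟨Q, hQ.symm⟩
      · exact Or.inr ⟨Q, hQ.symm⟩
    · rintro F (⟨Q, rfl⟩ | ⟨Q, rfl⟩)
      · exact ⟨fL a b Q, facet_of_tight ha hb _ (fL_tight Q), rfl⟩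
      · exact ⟨fR a b Q, facet_of_tight ha hb _ (fR_tight Q), rfl⟩
  rw [hset]
  have hfinA : A.Finite := Set.finite_range _
  have hfinB : B.Finite := Set.finite_range _
  have hncA : A.ncard = 2 ^ b := by
    rw [hA, ← Set.image_univ, Set.ncard_image_of_injective _ (faceL_inj ha),
      Set.ncard_univ, Nat.card_eq_fintype_card, Fintype.card_finset, Fintype.card_fin]
  have hncB : B.ncard = 2 ^ a := by
    rw [hB, ← Set.image_univ, Set.ncard_image_of_injective _ (faceR_inj hb),
      Set.ncard_univ, Nat.card_eq_fintype_card, Fintype.card_finset, Fintype.card_fin]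
  have hint : (A ∩ B).ncard = 2 := by
    rw [hA, hB, AB_inter ha hb]
    apply Set.ncard_pair
    intro hcon
    have : (Finset.univ : Finset (Fin b)) = ∅ := faceL_inj ha hcon
    exact Finset.ne_empty_of_mem (Finset.mem_univ (⟨0, hb⟩ : Fin b)) this
  have key := Set.ncard_union_add_ncard_inter A B hfinA hfinB
  rw [hncA, hncB, hint] at key
  have h2a : 2 ≤ 2 ^ a := by
    calc 2 = 2 ^ 1 := (pow_one 2).symm
    _ ≤ 2 ^ a := Nat.pow_le_pow_right (by norm_num) ha
  have h2b : 2 ≤ 2 ^ b := by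
    calc 2 = 2 ^ 1 := (pow_one 2).symm
    _ ≤ 2 ^ b := Nat.pow_le_pow_right (by norm_num) hb
  omega

end SEP


theorem stmt_16 (a b : ℕ) (ha : 1 ≤ a) (hb : 1 ≤ b) :
    (∀ f : Fin a ⊕ Fin b → ℤ,
        DefinesFacet (Fin a ⊕ Fin b)
            (symEdgePolytope (Fin a ⊕ Fin b) (completeBipartite a b)) (fun v => (f v : ℝ))
          ↔ ∃ k : ℤ,
              ((∀ i : Fin a, f (Sum.inl i) = k) ∧
                  ∀ j : Fin b, f (Sum.inr j) = k - 1 ∨ f (Sum.inr j) = k + 1) ∨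
              ((∀ j : Fin b, f (Sum.inr j) = k) ∧
                  ∀ i : Fin a, f (Sum.inl i) = k - 1 ∨ f (Sum.inl i) = k + 1)) ∧
      {F : Set (Fin a ⊕ Fin b → ℝ) |
          ∃ f : Fin a ⊕ Fin b → ℝ,
            DefinesFacet (Fin a ⊕ Fin b)
              (symEdgePolytope (Fin a ⊕ Fin b) (completeBipartite a b)) f ∧
            F = symEdgePolytope (Fin a ⊕ Fin b) (completeBipartite a b)
              ∩ {x | ∑ v, f v * x v = 1}}.ncard
        = 2 ^ a + 2 ^ b - 2 := by
  constructor
  · intro f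
    constructor
    · intro hf
      exact (SEP.int_char ha hb f).mp (SEP.tight_of_facet ha hb _ hf)
    · intro h
      exact SEP.facet_of_tight ha hb _ ((SEP.int_char ha hb f).mpr h)
  · exact SEP.count_faces ha hb
end

section
/- For all natural numbers a, b, the coefficient sequence of h_{a,b}(t) = Σ_{i=0}^{min(a,b)} C(2i,i)·C(a,i)·C(b,i)·t^i·(1+t)^{a+b+1-2i} is unimodal: there exists an index m such that the coefficients weakly increase up to position m and weakly decrease afterwards. -/
open Polynomial Finset

lemma choose_inc {N j : ℕ} (h : 2 * j + 2 ≤ N) : N.choose j ≤ N.choose (j + 1) := by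
  apply Nat.choose_le_succ_of_lt_half_left
  have : j + 1 ≤ N / 2 := (Nat.le_div_iff_mul_le (by norm_num)).mpr (by omega)
  omega

lemma choose_dec {N j : ℕ} (h : N ≤ 2 * j + 1) : N.choose (j + 1) ≤ N.choose j := by
  rcases eq_or_lt_of_le h with heq | hlt
  · -- N = 2j+1 : equality by symmetry
    have h1 : j + 1 ≤ N := by omega
    have : N - (j + 1) = j := by omega
    rw [← Nat.choose_symm h1, this]
  · -- N ≤ 2j
    have hN : N ≤ 2 * j := by omega
    by_cases hjN : j + 1 ≤ N
    · have hj : j ≤ N := by omega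
      rw [← Nat.choose_symm hjN, ← Nat.choose_symm hj]
      have h2 : N - j = (N - (j + 1)) + 1 := by omega
      rw [h2]
      exact choose_inc (by omega)
    · rw [Nat.choose_eq_zero_of_lt (by omega)]
      exact Nat.zero_le _

lemma hPoly_coeff (a b k : ℕ) :
    (hPoly a b).coeff k = ∑ i ∈ Finset.range (min a b + 1),
      (((2 * i).choose i * a.choose i * b.choose i : ℕ) : ℤ) *
        (if i ≤ k then (((a + b + 1 - 2 * i).choose (k - i) : ℕ) : ℤ) else 0) := by
  rw [hPoly, finset_sum_coeff]
  refine Finset.sum_congr rfl fun i _ => ?_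
  have : C (((2 * i).choose i * a.choose i * b.choose i : ℕ) : ℤ) * X ^ i
      * (1 + X) ^ (a + b + 1 - 2 * i)
      = C (((2 * i).choose i * a.choose i * b.choose i : ℕ) : ℤ) *
        ((1 + X) ^ (a + b + 1 - 2 * i) * X ^ i) := by ring
  rw [this, coeff_C_mul, coeff_mul_X_pow']
  congr 1
  split
  · rw [coeff_one_add_X_pow]
  · rfl

theorem stmt_19 (a b : ℕ) :
    ∃ m : ℕ, m ≤ a + b + 1 ∧
      (∀ k, k < m → (hPoly a b).coeff k ≤ (hPoly a b).coeff (k + 1)) ∧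
      (∀ k, m ≤ k → k < a + b + 1 → (hPoly a b).coeff (k + 1) ≤ (hPoly a b).coeff k) := by
  refine ⟨(a + b + 1) / 2, Nat.div_le_self _ _, ?_, ?_⟩
  · intro k hk
    rw [hPoly_coeff, hPoly_coeff]
    apply Finset.sum_le_sum
    intro i hi
    have hi' : i ≤ min a b := by simpa [Nat.lt_succ_iff] using hi
    have hab : 2 * i ≤ a + b := by
      have := min_le_left a b; have := min_le_right a b; omega
    have hk2 : (k + 1) * 2 ≤ a + b + 1 :=
      (Nat.le_div_iff_mul_le (by norm_num)).mp hk
    apply mul_le_mul_of_nonneg_left _ (by positivity)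
    by_cases h1 : i ≤ k
    · rw [if_pos h1, if_pos (by omega)]
      have : k + 1 - i = (k - i) + 1 := by omega
      rw [this]
      exact_mod_cast choose_inc (by omega)
    · rw [if_neg h1]
      split
      · positivity
      · exact le_refl 0
  · intro k hm hk
    rw [hPoly_coeff, hPoly_coeff]
    apply Finset.sum_le_sum
    intro i hi
    have hi' : i ≤ min a b := by simpa [Nat.lt_succ_iff] using hi
    have hab : 2 * i ≤ a + b := by
      have := min_le_left a b; have := min_le_right a b; omega
    have hdm := Nat.div_add_mod (a + b + 1) 2
    have hmod : (a + b + 1) % 2 < 2 := Nat.mod_lt _ (by norm_num)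
    have hik : i ≤ k := by omega
    apply mul_le_mul_of_nonneg_left _ (by positivity)
    rw [if_pos hik, if_pos (by omega)]
    have : k + 1 - i = (k - i) + 1 := by omega
    rw [this]
    exact_mod_cast choose_dec (by omega)
end
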